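/- arXiv:1105.4163 — 4 statements merged into one kernel-verified Lean document; each statement's English description precedes it below -/
import Mathlib

section
/- For any integer l ≥ 2, if M is a simple matroid with no U_{2,l+2}-minor, then the number of elements of M is at most (l^{r(M)} - 1)/(l - 1). -/
open Matroid Set

/-- The rank of a set `X` in a matroid `M`: the supremum of sizes of independent subsets. -/
noncomputable def mrk {α : Type*} (M : Matroid α) (X : Set α) : ℕ :=
  ⨆ I : {I : Set α // M.Indep I ∧ I ⊆ X}, I.1.ncard

/-- The rank of a matroid. -/
noncomputable def mrank {α : Type*} (M : Matroid α) : ℕ := mrk M M.E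

/-- Deletion of a set from a matroid. -/
def mdelete {α : Type*} (M : Matroid α) (D : Set α) : Matroid α := M ↾ (M.E \ D)

/-- Contraction of a set in a matroid, via duality. -/
def mcontract {α : Type*} (M : Matroid α) (C : Set α) : Matroid α := (M✶ ↾ (M.E \ C))✶

/-- `eps M X` is the number of points (rank-1 flats) of the restriction `M ↾ X`. -/
noncomputable def eps {α : Type*} (M : Matroid α) (X : Set α) : ℕ :=
  {P : Set α | (M ↾ X).IsFlat P ∧ mrk (M ↾ X) P = 1}.ncard

/-- `N` is isomorphic to the uniform matroid `U_{2,n}` (the `n`-point line). -/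
def IsUnif2 {α : Type*} (N : Matroid α) (n : ℕ) : Prop :=
  N.E.Finite ∧ N.E.ncard = n ∧ ∀ I ⊆ N.E, (N.Indep I ↔ I.Finite ∧ I.ncard ≤ 2)

/-- `M` has a minor isomorphic to `U_{2,n}`. -/
def HasLineMinor {α : Type*} (M : Matroid α) (n : ℕ) : Prop :=
  ∃ C D : Set α, IsUnif2 (mdelete (mcontract M C) D) n

/-- `M` is simple: every one- or two-element subset of the ground set is independent. -/
def MSimple {α : Type*} (M : Matroid α) : Prop :=
  ∀ e ∈ M.E, ∀ f ∈ M.E, M.Indep {e, f}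

/-- `M` is round: the ground set admits no partition into two sets of smaller rank. -/
def Round {α : Type*} (M : Matroid α) : Prop :=
  ¬ ∃ A B : Set α, A ∪ B = M.E ∧ Disjoint A B ∧ mrk M A < mrank M ∧ mrk M B < mrank M

/-- `N` is isomorphic to the projective geometry `PG(n-1, F)`: its ground set is in
bijection with the rank-1 subspaces of `F^n` in such a way that independence corresponds to
linear independence. -/
def IsProjGeom {α : Type*} (N : Matroid α) (n : ℕ) (F : Type*) [Field F] : Prop :=
  ∃ f : α → Submodule F (Fin n → F),
    Set.BijOn f N.E {W : Submodule F (Fin n → F) | Module.finrank F W = 1} ∧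
    ∀ I ⊆ N.E, (N.Indep I ↔ I.Finite ∧ Module.finrank F ↥(⨆ x ∈ I, f x) = I.ncard)

namespace KungAux

variable {α : Type*} {M : Matroid α} {C D I J X : Set α} {e : α}



lemma mdelete_ground (M : Matroid α) (D : Set α) : (mdelete M D).E = M.E \ D := rfl

lemma mcontract_ground (M : Matroid α) (C : Set α) : (mcontract M C).E = M.E \ C := rfl

lemma mdelete_indep_iff : (mdelete M D).Indep I ↔ M.Indep I ∧ I ⊆ M.E \ D :=
  restrict_indep_iff

lemma mcontract_indep_iff (hC : C ⊆ M.E) :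
    (mcontract M C).Indep I ↔ I ⊆ M.E \ C ∧ ∃ J, M.IsBasis J C ∧ M.Indep (I ∪ J) := by
  have hXE : M.E \ C ⊆ M✶.E := by rw [dual_ground]; exact diff_subset
  rw [mcontract, dual_indep_iff_exists']
  simp only [restrict_ground_eq]
  constructor
  · rintro ⟨hIX, B', hB', hdj⟩
    rw [isBase_restrict_iff hXE] at hB'
    obtain ⟨B, hB, hB'B⟩ := hB'.indep.exists_isBase_superset
    have hBX : B ∩ (M.E \ C) = B' :=
      (hB'.eq_of_subset_indep (hB.indep.subset inter_subset_left)
        (subset_inter hB'B hB'.subset) inter_subset_right).symm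
    have hBB : M✶✶.IsBasis ((M✶.E \ B) ∩ (M✶.E \ (M.E \ C))) (M✶.E \ (M.E \ C)) :=
      hB.compl_inter_isBasis_of_inter_isBasis (hBX ▸ hB')
    rw [dual_dual, dual_ground, diff_diff_cancel_left hC] at hBB
    refine ⟨hIX, (M.E \ B) ∩ C, hBB, ?_⟩
    have hIB : I ⊆ M.E \ B := by
      rw [subset_diff]
      refine ⟨hIX.trans diff_subset, disjoint_left.2 fun x hxI hxB => ?_⟩
      exact hdj.ne_of_mem hxI (hBX ▸ ⟨hxB, hIX hxI⟩) rfl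
    have hBc : M.IsBase (M.E \ B) := hB.compl_isBase_of_dual
    exact hBc.indep.subset (union_subset hIB inter_subset_left)
  · rintro ⟨hIX, J, hJ, hIJ⟩
    obtain ⟨B, hB, hIJB⟩ := hIJ.exists_isBase_superset
    have hBC : B ∩ C = J :=
      (hJ.eq_of_subset_indep (hB.indep.subset inter_subset_left)
        (subset_inter (subset_union_right.trans hIJB) hJ.subset) inter_subset_right).symm
    have hBB := hB.compl_inter_isBasis_of_inter_isBasis (hBC ▸ hJ)
    refine ⟨hIX, (M.E \ B) ∩ (M.E \ C), ?_, ?_⟩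
    · rwa [isBase_restrict_iff hXE]
    · refine disjoint_left.2 fun x hxI hx => hx.1.2 ?_
      exact (subset_union_left.trans hIJB) hxI

lemma mcontract_elem_indep_iff (he : M.Indep {e}) :
    (mcontract M {e}).Indep I ↔ I ⊆ M.E \ {e} ∧ M.Indep (insert e I) := by
  rw [mcontract_indep_iff he.subset_ground]
  refine and_congr_right fun _ => ⟨?_, fun h => ⟨{e}, he.isBasis_self, by rwa [union_singleton]⟩⟩
  rintro ⟨J, hJ, hIJ⟩
  have : J = {e} := hJ.eq_of_subset_indep he hJ.subset Subset.rfl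
  rwa [this, union_singleton] at hIJ

lemma mdelete_mdelete (M : Matroid α) (D₁ D₂ : Set α) :
    mdelete (mdelete M D₁) D₂ = mdelete M (D₁ ∪ D₂) := by
  rw [mdelete, mdelete, mdelete, restrict_ground_eq, restrict_restrict_eq _ diff_subset,
    diff_diff]

lemma mcontract_mcontract (M : Matroid α) (C₁ C₂ : Set α) :
    mcontract (mcontract M C₁) C₂ = mcontract M (C₁ ∪ C₂) := by
  rw [mcontract, mcontract, mcontract, dual_dual, dual_ground, restrict_ground_eq,
    restrict_restrict_eq _ diff_subset, diff_diff]

lemma mcontract_inter_ground (M : Matroid α) (C : Set α) :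
    mcontract M C = mcontract M (C ∩ M.E) := by
  rw [mcontract, mcontract, diff_inter_self_eq_diff]

lemma mcontract_empty (M : Matroid α) : mcontract M ∅ = M := by
  rw [mcontract, diff_empty, ← dual_ground, restrict_ground_eq_self, dual_dual]

lemma mcontract_mdelete_comm (hC : C ⊆ M.E) (hD : D ⊆ M.E) (hCD : Disjoint C D) :
    mcontract (mdelete M D) C = mdelete (mcontract M C) D := by
  have hCD' : C ⊆ M.E \ D := subset_diff.2 ⟨hC, hCD⟩
  refine ext_indep ?_ fun ⦃I⦄ hI => ?_
  · rw [mcontract_ground, mdelete_ground, mdelete_ground, mcontract_ground, diff_diff,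
      diff_diff, union_comm]
  · rw [mcontract_indep_iff (by rwa [mdelete_ground]), mdelete_indep_iff,
      mcontract_indep_iff hC, mdelete_ground]
    rw [mcontract_ground, mdelete_ground, diff_diff] at hI
    constructor
    · rintro ⟨hIs, J, hJ, hIJ, -⟩
      rw [mdelete, isBasis_restrict_iff diff_subset] at hJ
      refine ⟨⟨fun x hx => ⟨(hIs hx).1.1, (hIs hx).2⟩, J, hJ.1, hIJ⟩, ?_⟩
      rw [mcontract_ground, diff_diff, union_comm]
      rwa [diff_diff] at hIs
    · rintro ⟨⟨hIs, J, hJ, hIJ⟩, hID⟩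
      refine ⟨by rwa [diff_diff], J, ?_, hIJ,
        union_subset (hI.trans (diff_subset_diff_right subset_union_left)) (hJ.subset.trans hCD')⟩
      rw [mdelete, isBasis_restrict_iff diff_subset]
      exact ⟨hJ, hCD'⟩




lemma hasLineMinor_of_minor {C₀ D₀ : Set α} (hC₀ : C₀ ⊆ M.E) (hD₀ : D₀ ⊆ M.E)
    (hdj : Disjoint C₀ D₀) {n : ℕ}
    (h : HasLineMinor (mdelete (mcontract M C₀) D₀) n) : HasLineMinor M n := by
  obtain ⟨C, D, hU⟩ := h
  set N := mdelete (mcontract M C₀) D₀ with hN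
  have hNE : N.E = (M.E \ C₀) \ D₀ := by rw [hN, mdelete_ground, mcontract_ground]
  set C' := C ∩ N.E with hC'
  have hC'M : C' ⊆ M.E := by rw [hC', hNE]; exact inter_subset_right.trans (diff_subset.trans diff_subset)
  have hC'C₀ : Disjoint C' C₀ := by
    rw [hC', hNE]; exact disjoint_left.2 fun x hx hx0 => (hx.2.1.2 hx0)
  have hC'D₀ : Disjoint C' D₀ := by
    rw [hC', hNE]; exact disjoint_left.2 fun x hx hx0 => (hx.2.2 hx0)
  have h1 : mcontract N C = mcontract N C' := by
    rw [mcontract_inter_ground N C]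
  have h2 : mcontract N C' = mdelete (mcontract M (C₀ ∪ C')) D₀ := by
    rw [hN, mcontract_mdelete_comm (by rw [mcontract_ground]; exact subset_diff.2 ⟨hC'M, hC'C₀⟩)
      (by rw [mcontract_ground]; exact subset_diff.2 ⟨hD₀, hdj.symm⟩) hC'D₀,
      mcontract_mcontract]
  refine ⟨C₀ ∪ C', D₀ ∪ D, ?_⟩
  rwa [← mdelete_mdelete, ← h2, ← h1]

lemma indep_ncard_le_mrank [M.Finite] (hI : M.Indep I) : I.ncard ≤ mrank M := by
  have hbdd : BddAbove (Set.range fun I : {I : Set α // M.Indep I ∧ I ⊆ M.E} => I.1.ncard) := by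
    refine ⟨M.E.ncard, ?_⟩
    rintro n ⟨J, rfl⟩
    exact ncard_le_ncard J.2.2 M.ground_finite
  exact le_ciSup hbdd ⟨I, hI, hI.subset_ground⟩

lemma mrank_le_of {n : ℕ} (h : ∀ I, M.Indep I → I.ncard ≤ n) : mrank M ≤ n := by
  haveI : Nonempty {I : Set α // M.Indep I ∧ I ⊆ M.E} := ⟨⟨∅, M.empty_indep, empty_subset _⟩⟩
  exact ciSup_le fun I => h I.1 I.2.1

lemma indep_of_ncard_le_two (hsimple : MSimple M) (hfin : I.Finite) (hIE : I ⊆ M.E)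
    (h2 : I.ncard ≤ 2) : M.Indep I := by
  obtain h0 | h1 | h2' : I.ncard = 0 ∨ I.ncard = 1 ∨ I.ncard = 2 := by omega
  · rw [(ncard_eq_zero hfin).1 h0]; exact M.empty_indep
  · obtain ⟨a, rfl⟩ := ncard_eq_one.1 h1
    have := hsimple a (hIE rfl) a (hIE rfl)
    rwa [pair_eq_singleton] at this
  · obtain ⟨a, b, -, rfl⟩ := ncard_eq_two.1 h2'
    exact hsimple a (hIE (by simp)) b (hIE (by simp))

lemma not_indep_of_mem_closure_pair {t x y z : α} (het : M.Indep {e, t}) (hne : e ≠ t)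
    (hx : x ∈ M.closure {e, t}) (hy : y ∈ M.closure {e, t}) (hz : z ∈ M.closure {e, t})
    (hxy : x ≠ y) (hxz : x ≠ z) (hyz : y ≠ z) : ¬ M.Indep {x, y, z} := by
  intro hind
  have hsub : ({x, y, z} : Set α) ⊆ M.closure {e, t} := by
    rintro w hw
    rcases hw with rfl | rfl | rfl <;> assumption
  obtain ⟨J', hJ', hsubJ'⟩ := hind.subset_isBasis_of_subset hsub (M.closure_subset_ground _)
  have hbase : M.IsBasis {e, t} (M.closure {e, t}) := het.isBasis_closure
  have hcard : J'.encard = ({e, t} : Set α).encard := hJ'.encard_eq_encard hbase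
  have h3 : ({x, y, z} : Set α).encard = 3 := by
    rw [encard_insert_of_notMem (by simp [hxy, hxz]), encard_pair hyz]
    rfl
  have h2 : ({e, t} : Set α).encard = 2 := encard_pair hne
  have := (h3 ▸ encard_le_encard hsubJ').trans_eq (hcard.trans h2)
  norm_num at this




theorem kung_main {α : Type*} (l : ℕ) (hl : 2 ≤ l) :
    ∀ n : ℕ, ∀ M : Matroid α, M.Finite → MSimple M → ¬ HasLineMinor M (l + 2) →
      mrank M ≤ n → (M.E.ncard : ℝ) ≤ ((l : ℝ) ^ n - 1) / ((l : ℝ) - 1) := by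
  have hlR : (1 : ℝ) < (l : ℝ) := by exact_mod_cast (by omega : 1 < l)
  intro n
  induction n with
  | zero =>
    intro M hfin hsimple hminor hrank
    haveI := hfin
    have hE : M.E = ∅ := by
      by_contra h
      obtain ⟨x, hx⟩ := nonempty_iff_ne_empty.2 h
      have hxi : M.Indep {x} := by
        have := hsimple x hx x hx; rwa [pair_eq_singleton] at this
      have := indep_ncard_le_mrank hxi
      rw [ncard_singleton] at this
      omega
    rw [hE]
    norm_num
  | succ n ih =>
    intro M hfin hsimple hminor hrank
    haveI := hfin
    rcases M.E.eq_empty_or_nonempty with hE | ⟨e, he⟩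
    · rw [hE]
      have h1 : (1 : ℝ) ≤ (l : ℝ) ^ (n + 1) := by
        calc (1 : ℝ) = 1 ^ (n + 1) := (one_pow _).symm
        _ ≤ (l : ℝ) ^ (n + 1) := pow_le_pow_left₀ zero_le_one (by linarith) _
      simp only [ncard_empty, Nat.cast_zero]
      exact div_nonneg (by linarith) (by linarith)
    set S := M.E \ {e} with hS
    have hSfin : S.Finite := M.ground_finite.diff
    have heI : M.Indep {e} := by
      have := hsimple e he e he; rwa [pair_eq_singleton] at this
    set rel : α → α → Prop := fun f g => f = g ∨ ¬ M.Indep {e, f, g} with hrel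
    have hmemcl : ∀ f ∈ S, ∀ g ∈ S, rel f g → f ∈ M.closure {e, g} := by
      intro f hf g hg hrfg
      have hsubE : ({e, g} : Set α) ⊆ M.E := insert_subset he (singleton_subset_iff.2 hg.1)
      rcases hrfg with rfl | hdep
      · exact M.mem_closure_of_mem (by simp) hsubE
      · have hfg : f ≠ g := by
          rintro rfl
          exact hdep (by rw [show ({e, f, f} : Set α) = {e, f} by simp]; exact hsimple e he f hf.1)
        have hI : M.Indep {e, g} := hsimple e he g hg.1
        have hfne : f ∉ ({e, g} : Set α) := by
          simp only [mem_insert_iff, mem_singleton_iff]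
          push_neg
          exact ⟨fun h => hf.2 h, hfg⟩
        have hni : ¬ M.Indep (insert f {e, g}) := by
          intro h
          exact hdep (by rwa [Set.insert_comm] at h)
        rw [hI.insert_indep_iff_of_notMem hfne] at hni
        by_contra hns
        exact hni ⟨hf.1, hns⟩
    have hrel_refl : ∀ f, rel f f := fun f => Or.inl rfl
    have hrel_symm : ∀ f g, rel f g → rel g f := by
      intro f g h
      rcases h with rfl | hdep
      · exact Or.inl rfl
      · exact Or.inr fun h => hdep (by rwa [Set.pair_comm g f] at h)
    have hrel_trans : ∀ f ∈ S, ∀ g ∈ S, ∀ h ∈ S, rel f g → rel g h → rel f h := by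
      intro f hf g hg h hh hfg hgh
      by_cases hfh : f = h
      · exact Or.inl hfh
      refine Or.inr fun hind => ?_
      have hI : M.Indep {e, g} := hsimple e he g hg.1
      have hsubE : ({e, g} : Set α) ⊆ M.E := insert_subset he (singleton_subset_iff.2 hg.1)
      have hfc : f ∈ M.closure {e, g} := hmemcl f hf g hg hfg
      have hhc : h ∈ M.closure {e, g} := hmemcl h hh g hg (hrel_symm _ _ hgh)
      have hec : e ∈ M.closure {e, g} := M.mem_closure_of_mem (by simp) hsubE
      exact not_indep_of_mem_closure_pair hI (fun hc => hg.2 hc.symm) hec hfc hhc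
        (fun hc => hf.2 hc.symm) (fun hc => hh.2 hc.symm) hfh hind
    letI sd : Setoid ↥S :=
      ⟨fun a b => rel ↑a ↑b,
        ⟨fun a => hrel_refl _, fun {a b} h => hrel_symm _ _ h,
          fun {a b c} h1 h2 => hrel_trans _ a.2 _ b.2 _ c.2 h1 h2⟩⟩
    set rep : ↥S → ↥S := fun a => (Quotient.mk sd a).out with hrepdef
    have hrep_rel : ∀ a : ↥S, rel ↑(rep a) ↑a := fun a => Quotient.mk_out a
    have hrep_idem : ∀ a : ↥S, rep (rep a) = rep a := by
      intro a
      show (Quotient.mk sd ((Quotient.mk sd a).out)).out = (Quotient.mk sd a).out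
      rw [Quotient.out_eq]
    have hrep_eq : ∀ a b : ↥S, rel ↑a ↑b → rep a = rep b := by
      intro a b h
      show (Quotient.mk sd a).out = (Quotient.mk sd b).out
      rw [Quotient.sound h]
    set T : Set α := Subtype.val '' (Set.range rep) with hT
    have hTS : T ⊆ S := by rintro x ⟨a, ha, rfl⟩; exact a.2
    have hTrep : ∀ f (hf : f ∈ S), ↑(rep ⟨f, hf⟩) ∈ T ∧ rel f ↑(rep ⟨f, hf⟩) := fun f hf =>
      ⟨⟨rep ⟨f, hf⟩, ⟨⟨f, hf⟩, rfl⟩, rfl⟩, hrel_symm _ _ (hrep_rel ⟨f, hf⟩)⟩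
    have hTdist : ∀ t ∈ T, ∀ t' ∈ T, rel t t' → t = t' := by
      rintro t ⟨a, ⟨a0, rfl⟩, rfl⟩ t' ⟨b, ⟨b0, rfl⟩, rfl⟩ hr
      have h := hrep_eq _ _ hr
      rw [hrep_idem, hrep_idem] at h
      exact congrArg _ h
    set N := mdelete (mcontract M {e}) (S \ T) with hN
    have hNE : N.E = T := by
      rw [hN, mdelete_ground, mcontract_ground, ← hS, Set.diff_diff_cancel_left hTS]
    have hNfin : N.Finite := ⟨by rw [hNE]; exact hSfin.subset hTS⟩
    have hNindep : ∀ I, N.Indep I ↔ I ⊆ T ∧ M.Indep (insert e I) := by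
      intro I
      rw [hN, mdelete_indep_iff, mcontract_elem_indep_iff heI, mcontract_ground, ← hS,
        Set.diff_diff_cancel_left hTS]
      exact ⟨fun h => ⟨h.2, h.1.2⟩, fun h => ⟨⟨h.1.trans hTS, h.2⟩, h.1⟩⟩
    have hNsimple : MSimple N := by
      intro f hf g hg
      rw [hNE] at hf hg
      rw [hNindep]
      refine ⟨by rintro x (rfl | rfl); exacts [hf, hg], ?_⟩
      by_cases hfg : f = g
      · subst hfg
        rw [show (insert e {f, f} : Set α) = {e, f} by simp]
        exact hsimple e he f (hTS hf).1
      · have hnr : ¬ rel f g := fun h => hfg (hTdist f hf g hg h)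
        exact not_not.1 fun hni => hnr (Or.inr hni)
    have hNrank : mrank N ≤ n := by
      refine mrank_le_of fun I hI => ?_
      rw [hNindep] at hI
      obtain ⟨hIT, hind⟩ := hI
      have heI' : e ∉ I := fun h => (hTS (hIT h)).2 rfl
      have hfin : I.Finite := hSfin.subset (hIT.trans hTS)
      have hle := indep_ncard_le_mrank hind
      rw [ncard_insert_of_notMem heI' hfin] at hle
      omega
    have hNminor : ¬ HasLineMinor N (l + 2) := by
      intro h
      refine hminor (hasLineMinor_of_minor (singleton_subset_iff.2 he)
        (diff_subset.trans (hS ▸ diff_subset)) ?_ h)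
      rw [disjoint_singleton_left]
      intro hcon
      exact hcon.1.2 rfl
    set cls : α → Set α := fun t => {f | f ∈ S ∧ rel f t} with hcls
    have hclsS : ∀ t, cls t ⊆ S := fun t x hx => hx.1
    have hcls_le : ∀ t ∈ T, (cls t).ncard ≤ l := by
      intro t ht
      by_contra hgt
      push_neg at hgt
      obtain ⟨F, hFsub, hFcard⟩ := Set.exists_subset_card_eq (show l + 1 ≤ (cls t).ncard from hgt)
      have hFS : F ⊆ S := hFsub.trans (hclsS t)
      have hFfin : F.Finite := hSfin.subset hFS
      have heF : e ∉ F := fun h => (hFS h).2 rfl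
      set S₀ : Set α := insert e F with hS₀
      have hS₀E : S₀ ⊆ M.E := insert_subset he (hFS.trans diff_subset)
      have htS : t ∈ S := hTS ht
      have hetI : M.Indep {e, t} := hsimple e he t htS.1
      have hS₀cl : S₀ ⊆ M.closure {e, t} := by
        rintro x (rfl | hxF)
        · exact M.mem_closure_of_mem (by simp)
            (insert_subset he (singleton_subset_iff.2 htS.1))
        · exact hmemcl x (hFS hxF) t htS (hFsub hxF).2
      refine hminor ⟨∅, M.E \ S₀, ?_⟩
      have hrw : mdelete (mcontract M ∅) (M.E \ S₀) = M ↾ S₀ := by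
        rw [mcontract_empty, mdelete, Set.diff_diff_cancel_left hS₀E]
      rw [hrw]
      refine ⟨by rw [restrict_ground_eq]; exact hFfin.insert e, ?_, ?_⟩
      · rw [restrict_ground_eq, hS₀, ncard_insert_of_notMem heF hFfin, hFcard]
      · intro I hIsub
        rw [restrict_ground_eq] at hIsub
        rw [restrict_indep_iff]
        constructor
        · rintro ⟨hind, hIS₀⟩
          have hIfin : I.Finite := (hFfin.insert e).subset hIS₀
          refine ⟨hIfin, ?_⟩
          by_contra h3
          push_neg at h3
          obtain ⟨Jt, hJI, hJ3⟩ := Set.exists_subset_card_eq (show 3 ≤ I.ncard from h3)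
          obtain ⟨x, y, z, hxy, hxz, hyz, rfl⟩ := ncard_eq_three.1 hJ3
          exact not_indep_of_mem_closure_pair hetI (fun hc => htS.2 hc.symm)
            (hS₀cl (hIsub (hJI (by simp)))) (hS₀cl (hIsub (hJI (by simp))))
            (hS₀cl (hIsub (hJI (by simp)))) hxy hxz hyz (hind.subset hJI)
        · rintro ⟨hfin, h2⟩
          exact ⟨indep_of_ncard_le_two hsimple hfin (hIsub.trans hS₀E) h2, hIsub⟩
    have hTfin : T.Finite := hSfin.subset hTS
    have hcount : S.ncard ≤ l * T.ncard := by
      classical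
      have key : hSfin.toFinset ⊆
          hTfin.toFinset.biUnion (fun t => ((hSfin.subset (hclsS t)).toFinset)) := by
        intro x hx
        rw [Set.Finite.mem_toFinset] at hx
        obtain ⟨htT, hrel'⟩ := hTrep x hx
        rw [Finset.mem_biUnion]
        exact ⟨_, hTfin.mem_toFinset.2 htT, (hSfin.subset (hclsS _)).mem_toFinset.2 ⟨hx, hrel'⟩⟩
      have h2 := Finset.card_le_card key
      have h3 := Finset.card_biUnion_le (s := hTfin.toFinset)
        (t := fun t => ((hSfin.subset (hclsS t)).toFinset))
      have h4 : ∑ t ∈ hTfin.toFinset, ((hSfin.subset (hclsS t)).toFinset).card ≤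
          hTfin.toFinset.card * l := by
        refine (Finset.sum_le_card_nsmul _ _ l fun t ht => ?_).trans_eq (by simp [smul_eq_mul])
        rw [← Set.ncard_eq_toFinset_card (cls t) (hSfin.subset (hclsS t))]
        exact hcls_le t (hTfin.mem_toFinset.1 ht)
      rw [Set.ncard_eq_toFinset_card S hSfin, Set.ncard_eq_toFinset_card T hTfin]
      calc hSfin.toFinset.card ≤ _ := h2
        _ ≤ _ := h3
        _ ≤ hTfin.toFinset.card * l := h4
        _ = l * hTfin.toFinset.card := mul_comm _ _
    have hEcard : M.E.ncard = S.ncard + 1 := by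
      rw [hS]
      exact (ncard_diff_singleton_add_one he M.ground_finite).symm
    have hTbound : ((T.ncard : ℝ)) ≤ ((l : ℝ) ^ n - 1) / ((l : ℝ) - 1) := by
      have hb := ih N hNfin hNsimple hNminor hNrank
      rwa [hNE] at hb
    have hden : (0 : ℝ) < (l : ℝ) - 1 := by linarith
    have hE' : (M.E.ncard : ℝ) ≤ 1 + (l : ℝ) * T.ncard := by
      rw [hEcard]
      push_cast
      have hc : (S.ncard : ℝ) ≤ (l : ℝ) * T.ncard := by exact_mod_cast hcount
      linarith
    have hstep : (l : ℝ) * (T.ncard : ℝ) ≤ (l : ℝ) * (((l : ℝ) ^ n - 1) / ((l : ℝ) - 1)) :=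
      mul_le_mul_of_nonneg_left hTbound (by positivity)
    have hfinal : 1 + (l : ℝ) * (((l : ℝ) ^ n - 1) / ((l : ℝ) - 1)) =
        ((l : ℝ) ^ (n + 1) - 1) / ((l : ℝ) - 1) := by
      field_simp
      ring
    linarith

end KungAux

/-- Kung's theorem: a simple matroid with no `U_{2,l+2}`-minor has at most
`(l^r - 1)/(l - 1)` elements. -/
theorem stmt0 {α : Type*} (l : ℕ) (hl : 2 ≤ l) (M : Matroid α) [M.Finite]
    (hsimple : MSimple M) (hminor : ¬ HasLineMinor M (l + 2)) :
    (M.E.ncard : ℝ) ≤ ((l : ℝ) ^ mrank M - 1) / ((l : ℝ) - 1) := by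
  exact KungAux.kung_main l hl (mrank M) M ‹M.Finite› hsimple hminor le_rfl
end

section
/- If M is a round matroid that contains a restriction isomorphic to U_{2,q+2} and a restriction isomorphic to PG(2,q), where q is a prime power, then M has a U_{2,q^2+1}-minor. -/
open Matroid Set

section MrkLemmas

variable {α : Type*} {M : Matroid α} {I J X Y B : Set α} {n : ℕ} {e : α}

lemma ncard_le_mrk [M.Finite] (hI : M.Indep I) (hIX : I ⊆ X) : I.ncard ≤ mrk M X := by
  have hbdd : BddAbove (Set.range fun I : {I : Set α // M.Indep I ∧ I ⊆ X} => I.1.ncard) := by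
    refine ⟨M.E.ncard, ?_⟩
    rintro n ⟨⟨J, hJ, -⟩, rfl⟩
    exact Set.ncard_le_ncard hJ.subset_ground M.ground_finite
  exact le_ciSup hbdd (⟨I, hI, hIX⟩ : {I : Set α // M.Indep I ∧ I ⊆ X})

lemma mrk_le (h : ∀ I, M.Indep I → I ⊆ X → I.ncard ≤ n) : mrk M X ≤ n := by
  have : Nonempty {I : Set α // M.Indep I ∧ I ⊆ X} := ⟨⟨∅, M.empty_indep, Set.empty_subset _⟩⟩
  exact ciSup_le fun ⟨I, hI, hIX⟩ => h I hI hIX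

lemma Basis'_mrk [M.Finite] (hJ : M.IsBasis' J X) : mrk M X = J.ncard := by
  refine le_antisymm (mrk_le fun I hI hIX => ?_) (ncard_le_mrk hJ.indep hJ.subset)
  by_contra hlt
  push_neg at hlt
  have hIf : I.Finite := M.set_finite I hI.subset_ground
  have hJf : J.Finite := M.set_finite J hJ.indep.subset_ground
  have hencard : J.encard < I.encard := by
    rw [← hIf.cast_ncard_eq, ← hJf.cast_ncard_eq]
    exact_mod_cast hlt
  obtain ⟨e, heIJ, hins⟩ := hJ.indep.augment hI hencard
  have := hJ.2 ⟨hins, Set.insert_subset (hIX heIJ.1) hJ.subset⟩ (Set.subset_insert e J)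
  exact heIJ.2 (this (Set.mem_insert e J))

lemma mrank_eq_ncard_base [M.Finite] (hB : M.IsBase B) : mrank M = B.ncard :=
  Basis'_mrk hB.isBasis_ground.isBasis'

/-- An independent set contained in the closure of `X` has size at most `mrk M X`. -/
lemma ncard_le_mrk_of_subset_closure [M.Finite] (hI : M.Indep I) (hIX : I ⊆ M.closure X) :
    I.ncard ≤ mrk M X := by
  obtain ⟨J, hJ⟩ := M.exists_isBasis' X
  obtain ⟨I', hI', hII'⟩ := hI.subset_isBasis_of_subset hIX (M.closure_subset_ground X)
  have h1 : I'.encard = J.encard := hI'.encard_eq_encard hJ.isBasis_closure_right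
  have h2 : I.ncard ≤ I'.ncard := Set.ncard_le_ncard hII'
      (M.set_finite I' hI'.indep.subset_ground)
  have h3 : I'.ncard = J.ncard := by
    rw [← Nat.cast_inj (R := ℕ∞), (M.set_finite I' hI'.indep.subset_ground).cast_ncard_eq,
      (M.set_finite J hJ.indep.subset_ground).cast_ncard_eq, h1]
  rw [Basis'_mrk hJ]
  omega

lemma mrk_le_ncard [M.Finite] (X : Set α) (hX : X.Finite) : mrk M X ≤ X.ncard :=
  mrk_le fun _ _ hIX => Set.ncard_le_ncard hIX hX

lemma mrk_lt_mrank_of_not_spanning [M.Finite] (he : e ∈ M.E) (hecl : e ∉ M.closure X) :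
    mrk M (M.closure X) < mrank M := by
  obtain ⟨J, hJ⟩ := M.exists_isBasis' (M.closure X)
  obtain ⟨B, hB, hJB⟩ := hJ.indep.exists_isBase_superset
  have hne : J ≠ B := by
    rintro rfl
    have hclJ : M.closure J = M.closure X := by
      rw [hJ.closure_eq_closure, M.closure_closure]
    have heJ : e ∈ M.closure J := by rw [hB.closure_eq]; exact he
    rw [hclJ] at heJ
    exact hecl heJ
  rw [Basis'_mrk hJ, mrank_eq_ncard_base hB]
  exact Set.ncard_lt_ncard (ssubset_of_ne_of_subset hne hJB) (M.set_finite B hB.subset_ground)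

end MrkLemmas
section ContractLemmas

variable {α : Type*} {M : Matroid α} {I J X C B : Set α} {x : α}

lemma mcontract_ground (M : Matroid α) (C : Set α) : (mcontract M C).E = M.E \ C := rfl

lemma mcontract_indep_iff (hC : M.Indep C) :
    (mcontract M C).Indep I ↔ I ⊆ M.E \ C ∧ M.Indep (I ∪ C) := by
  have hCE : C ⊆ M.E := hC.subset_ground
  rw [mcontract, dual_indep_iff_exists']
  simp only [restrict_ground_eq, isBase_restrict_iff']
  constructor
  · rintro ⟨hIE, B, hB', hIB⟩
    refine ⟨hIE, ?_⟩
    have hB : M✶.IsBasis B (M.E \ C) := hB'.isBasis (by rw [dual_ground]; exact Set.diff_subset)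
    by_contra hdep
    obtain ⟨J, hJ, hCJ⟩ := hC.subset_isBasis_of_subset (Set.subset_union_right (s := I))
      (Set.union_subset (hIE.trans Set.diff_subset) hCE)
    have hJne : J ≠ I ∪ C := fun h => hdep (h ▸ hJ.indep)
    obtain ⟨x, hxIC, hxJ⟩ : ∃ x, x ∈ I ∪ C ∧ x ∉ J := by
      by_contra h
      push_neg at h
      exact hJne (hJ.subset.antisymm h)
    have hxI : x ∈ I := hxIC.elim id fun h => absurd (hCJ h) hxJ
    -- x is in the dual closure of B, so `insert x B` is dual-dependent
    have hxB : x ∉ B := (Set.disjoint_left.mp hIB) hxI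
    have hxcl : x ∈ M✶.closure B := hB.subset_closure (hIE hxI)
    have hdepdual : M✶.Dep (insert x B) :=
      ((hB.indep.mem_closure_iff_of_notMem hxB).mp hxcl)
    -- construct a base of M disjoint from `insert x B`
    obtain ⟨B₀, hB₀, hBB₀⟩ := (dual_indep_iff_exists'.mp hB.indep).2
    set S := (B₀ ∪ J) \ {x} with hS
    have hJS : J ⊆ S := Set.subset_diff_singleton Set.subset_union_right hxJ
    have hxclJ : x ∈ M.closure J := hJ.subset_closure hxIC
    have hspan : M.E ⊆ M.closure S := by
      have h1 : B₀ ⊆ insert x S := by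
        intro b hb
        rcases eq_or_ne b x with rfl | hne
        · exact Set.mem_insert _ _
        · exact Set.mem_insert_of_mem _ ⟨Set.mem_union_left _ hb, hne⟩
      have h2 : x ∈ M.closure S := M.closure_subset_closure hJS hxclJ
      calc M.E = M.closure B₀ := hB₀.closure_eq.symm
        _ ⊆ M.closure (insert x S) := M.closure_subset_closure h1
        _ = M.closure S := Matroid.closure_insert_eq_of_mem_closure h2
    have hSE : S ⊆ M.E := Set.diff_subset.trans (Set.union_subset hB₀.subset_ground
      (hJ.indep.subset_ground))
    obtain ⟨J₁, hJ₁⟩ := M.exists_isBasis S hSE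
    have hJ₁base : M.IsBase J₁ := hJ₁.indep.isBase_of_ground_subset_closure
      (by rw [hJ₁.closure_eq_closure]; exact hspan)
    have hdisj : Disjoint (insert x B) J₁ := by
      have hJ₁S : J₁ ⊆ S := hJ₁.subset
      refine Set.disjoint_left.mpr ?_
      rintro y (rfl | hyB)
      · exact fun hyJ₁ => (hJ₁S hyJ₁).2 rfl
      · intro hyJ₁
        rcases (hJ₁S hyJ₁).1 with h | h
        · exact (Set.disjoint_left.mp hBB₀) hyB h
        · rcases hJ.subset h with h' | h'
          · exact (Set.disjoint_left.mp hIB) h' hyB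
          · exact (hB.subset hyB).2 h'
    exact hdepdual.not_indep (dual_indep_iff_exists'.mpr
      ⟨Set.insert_subset (hIE hxI).1 (hB.indep.subset_ground.trans_eq (by rw [dual_ground])),
        ⟨J₁, hJ₁base, hdisj⟩⟩)
  · rintro ⟨hIE, hIC⟩
    refine ⟨hIE, ?_⟩
    obtain ⟨B₀, hB₀, hICB₀⟩ := hIC.exists_isBase_superset
    set B := (M.E \ C) \ B₀ with hB
    have hBE : B ⊆ M✶.E := by rw [dual_ground]; exact Set.diff_subset.trans Set.diff_subset
    have hBco : M✶.Indep B := dual_indep_iff_exists'.mpr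
      ⟨hBE.trans_eq (by rw [dual_ground]), ⟨B₀, hB₀, Set.disjoint_left.mpr fun y hy => hy.2⟩⟩
    have hkey : ∀ x ∈ M.E \ C, x ∉ B → M✶.Dep (insert x B) := by
      intro x hx hxB
      have hxB₀ : x ∈ B₀ := by
        by_contra h
        exact hxB ⟨hx, h⟩
      rw [Matroid.dep_iff]
      refine ⟨fun hind => ?_, Set.insert_subset (by rw [dual_ground]; exact hx.1) hBE⟩
      obtain ⟨B₁, hB₁, hdisj⟩ := (dual_indep_iff_exists'.mp hind).2
      have hB₁sub : B₁ ⊆ B₀ := by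
        intro y hy
        have hyE : y ∈ M.E := hB₁.subset_ground hy
        have hynB : y ∉ insert x B := Set.disjoint_right.mp hdisj hy
        by_contra hyB₀
        rcases Classical.em (y ∈ C) with hyC | hyC
        · exact hyB₀ (hICB₀ (Set.mem_union_right _ hyC))
        · exact hynB (Set.mem_insert_of_mem _ ⟨⟨hyE, hyC⟩, hyB₀⟩)
      have : B₁ = B₀ := hB₁.eq_of_subset_isBase hB₀ hB₁sub
      exact (Set.disjoint_left.mp hdisj (Set.mem_insert x B)) (this ▸ hxB₀)
    have hBbasis : M✶.IsBasis B (M.E \ C) := by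
      rw [Matroid.isBasis_iff_indep_subset_closure]
      refine ⟨hBco, Set.diff_subset, fun x hx => ?_⟩
      by_cases hxB : x ∈ B
      · exact M✶.subset_closure B (hBco.subset_ground) hxB
      · exact (hBco.mem_closure_iff_of_notMem hxB).mpr (hkey x hx hxB)
    exact ⟨B, hBbasis.isBasis', Set.disjoint_left.mpr fun y hyI hyB =>
      hyB.2 (hICB₀ (Set.mem_union_left _ hyI))⟩

end ContractLemmas
section LinAlg

open Module Submodule

variable {F : Type} [Field F] {V : Type*} [AddCommGroup V] [Module F V] [FiniteDimensional F V]

lemma exists_span_eq {U : Submodule F V} (hU : Module.finrank F U = 1) :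
    ∃ v : V, v ≠ 0 ∧ U = Submodule.span F {v} := by
  have hbot : U ≠ ⊥ := by
    intro h
    rw [h, finrank_bot] at hU
    simp at hU
  obtain ⟨v, hvU, hv0⟩ := Submodule.exists_mem_ne_zero_of_ne_bot hbot
  refine ⟨v, hv0, ?_⟩
  have hle : Submodule.span F {v} ≤ U := by
    rwa [Submodule.span_singleton_le_iff_mem]
  exact (Submodule.eq_of_le_of_finrank_le hle
    (by rw [finrank_span_singleton hv0, hU])).symm

lemma finrank_sup_eq_two {U W : Submodule F V} (hU : Module.finrank F U = 1)
    (hW : Module.finrank F W = 1) (hne : U ≠ W) : Module.finrank F ↥(U ⊔ W) = 2 := by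
  have hinf : U ⊓ W = ⊥ := by
    by_contra h0
    have h1 : 1 ≤ Module.finrank F ↥(U ⊓ W) := by
      obtain ⟨v, hv, hv0⟩ := Submodule.exists_mem_ne_zero_of_ne_bot h0
      have : Submodule.span F {v} ≤ U ⊓ W := by rwa [Submodule.span_singleton_le_iff_mem]
      calc 1 = Module.finrank F (Submodule.span F {v}) := (finrank_span_singleton hv0).symm
        _ ≤ _ := Submodule.finrank_mono this
    have h2 : U ⊓ W = U := Submodule.eq_of_le_of_finrank_le inf_le_left (by omega)
    have h3 : U ⊓ W = W := Submodule.eq_of_le_of_finrank_le inf_le_right (by omega)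
    exact hne (h2.symm.trans h3)
  have h := Submodule.finrank_sup_add_finrank_inf_eq U W
  rw [hinf, finrank_bot, hU, hW] at h
  omega

lemma exists_line_in_inf (h3 : Module.finrank F V = 3) {W₁ W₂ : Submodule F V}
    (h1 : Module.finrank F W₁ = 2) (h2 : Module.finrank F W₂ = 2) :
    ∃ U : Submodule F V, Module.finrank F U = 1 ∧ U ≤ W₁ ∧ U ≤ W₂ := by
  have h := Submodule.finrank_sup_add_finrank_inf_eq W₁ W₂
  have hsup : Module.finrank F ↥(W₁ ⊔ W₂) ≤ 3 := h3 ▸ Submodule.finrank_le _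
  have hinf : 1 ≤ Module.finrank F ↥(W₁ ⊓ W₂) := by omega
  have hbot : W₁ ⊓ W₂ ≠ ⊥ := by
    intro h0
    rw [h0, finrank_bot] at hinf
    omega
  obtain ⟨v, hv, hv0⟩ := Submodule.exists_mem_ne_zero_of_ne_bot hbot
  exact ⟨Submodule.span F {v}, finrank_span_singleton hv0,
    (Submodule.span_singleton_le_iff_mem _ _).mpr hv.1,
    (Submodule.span_singleton_le_iff_mem _ _).mpr hv.2⟩

lemma card_bound_of_subset_sup [Fintype F] {α : Type*} {X : Set α} {f : α → Submodule F V}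
    {w₁ w₂ : V}
    (h1 : ∀ x ∈ X, Module.finrank F (f x) = 1)
    (hle : ∀ x ∈ X, f x ≤ Submodule.span F {w₁} ⊔ Submodule.span F {w₂})
    (hinj : Set.InjOn f X) : X.ncard ≤ Fintype.card F + 1 := by
  have hgen : ∀ x ∈ X, ∃ s t : F, s • w₁ + t • w₂ ≠ 0 ∧ f x = Submodule.span F {s • w₁ + t • w₂} := by
    intro x hx
    obtain ⟨v, hv0, hvspan⟩ := exists_span_eq (h1 x hx)
    have hvmem : v ∈ Submodule.span F {w₁} ⊔ Submodule.span F {w₂} := by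
      apply hle x hx
      rw [hvspan]
      exact Submodule.mem_span_singleton_self v
    obtain ⟨a, ha, b, hb, hab⟩ := Submodule.mem_sup.mp hvmem
    obtain ⟨s, rfl⟩ := Submodule.mem_span_singleton.mp ha
    obtain ⟨t, rfl⟩ := Submodule.mem_span_singleton.mp hb
    exact ⟨s, t, hab ▸ hv0, by rw [hvspan, hab]⟩
  classical
  choose! s t hne hspan using hgen
  set g : α → Option F := fun x => if s x = 0 then none else some (t x / s x) with hg
  have hkey : ∀ x ∈ X, f x = (match g x with
      | none => Submodule.span F {w₂}
      | some c => Submodule.span F {w₁ + c • w₂}) := by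
    intro x hx
    by_cases hs : s x = 0
    · have hgx : g x = none := by simp [hg, hs]
      rw [hgx]
      have ht : t x ≠ 0 := by
        intro ht0
        exact hne x hx (by rw [hs, ht0]; simp)
      rw [hspan x hx, hs]
      simp only [zero_smul, zero_add]
      exact Submodule.span_singleton_smul_eq (IsUnit.mk0 _ ht) w₂
    · have hgx : g x = some (t x / s x) := by simp [hg, hs]
      rw [hgx]
      have hveq : s x • w₁ + t x • w₂ = s x • (w₁ + (t x / s x) • w₂) := by
        rw [smul_add, smul_smul, mul_div_cancel₀ _ hs]
      rw [hspan x hx, hveq]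
      exact Submodule.span_singleton_smul_eq (IsUnit.mk0 _ hs) _
  have hginj : Set.InjOn g X := by
    intro x hx y hy hxy
    apply hinj hx hy
    rw [hkey x hx, hkey y hy, hxy]
  calc X.ncard ≤ (Set.univ : Set (Option F)).ncard :=
        Set.ncard_le_ncard_of_injOn g (fun a _ => Set.mem_univ _) hginj (Set.finite_univ)
    _ = Fintype.card F + 1 := by
        rw [Set.ncard_univ, Nat.card_eq_fintype_card, Fintype.card_option]

end LinAlg
section Vecs

variable {F : Type} [Field F]

/-- The normalized representative vectors for the points of the projective plane. -/
def vec3 (F : Type) [Field F] : (F × F) ⊕ (Option F) → (Fin 3 → F)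
  | .inl (a, b) => ![1, a, b]
  | .inr (some c) => ![0, 1, c]
  | .inr none => ![0, 0, 1]

lemma vec3_ne_zero (t : (F × F) ⊕ (Option F)) : vec3 F t ≠ 0 := by
  rcases t with ⟨a, b⟩ | (_ | c) <;> intro h
  · have := congrFun h 0; simp [vec3] at this
  · have := congrFun h 2; simp [vec3] at this
  · have := congrFun h 1; simp [vec3] at this

lemma vec3_span_inj : Function.Injective (fun t => Submodule.span F {vec3 F t}) := by
  intro t t' h
  simp only at h
  have hmem : vec3 F t ∈ Submodule.span F {vec3 F t'} := by
    rw [← h]; exact Submodule.mem_span_singleton_self _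
  obtain ⟨c, hc⟩ := Submodule.mem_span_singleton.mp hmem
  rcases t with ⟨a, b⟩ | (_ | d) <;> rcases t' with ⟨a', b'⟩ | (_ | d') <;>
    simp only [vec3] at hc
  · have h0 := congrFun hc 0
    have h1 := congrFun hc 1
    have h2 := congrFun hc 2
    simp at h0 h1 h2
    subst h0; simp at h1 h2; subst h1; subst h2; rfl
  · have h0 := congrFun hc 0; simp at h0
  · have h0 := congrFun hc 0; simp at h0
  · have h0 := congrFun hc 0
    have h2 := congrFun hc 2
    simp at h0 h2
    rw [h0] at h2; simp at h2
  · rfl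
  · have h1 := congrFun hc 1
    have h2 := congrFun hc 2
    simp at h1 h2
    rw [h1] at h2; simp at h2
  · have h0 := congrFun hc 0
    have h1 := congrFun hc 1
    simp at h0 h1
    rw [h0] at h1; simp at h1
  · have h1 := congrFun hc 1; simp at h1
  · have h1 := congrFun hc 1
    have h2 := congrFun hc 2
    simp at h1 h2
    subst h1; simp at h2; subst h2; rfl

lemma vec3_span_finrank (t : (F × F) ⊕ (Option F)) :
    Module.finrank F (Submodule.span F {vec3 F t}) = 1 :=
  finrank_span_singleton (vec3_ne_zero t)

lemma span_std_triple_top :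
    Submodule.span F {(![1,0,0] : Fin 3 → F)} ⊔ Submodule.span F {(![0,1,0] : Fin 3 → F)} ⊔
      Submodule.span F {(![0,0,1] : Fin 3 → F)} = ⊤ := by
  rw [eq_top_iff]
  intro w _
  have hw : w = w 0 • ![1,0,0] + w 1 • ![0,1,0] + w 2 • ![0,0,1] := by
    funext i
    fin_cases i <;> simp
  rw [hw]
  refine Submodule.add_mem _ (Submodule.add_mem _ ?_ ?_) ?_
  · exact Submodule.smul_mem _ _ (Submodule.mem_sup_left (Submodule.mem_sup_left (Submodule.mem_span_singleton_self _)))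
  · exact Submodule.smul_mem _ _ (Submodule.mem_sup_left (Submodule.mem_sup_right (Submodule.mem_span_singleton_self _)))
  · exact Submodule.smul_mem _ _ (Submodule.mem_sup_right (Submodule.mem_span_singleton_self _))

end Vecs
set_option maxHeartbeats 1000000

section PGFacts

variable {α : Type*} {M : Matroid α} {F : Type} [Field F] [Fintype F] {P : Set α}
  {f : α → Submodule F (Fin 3 → F)}

/-- Abbreviation for the independence characterization in the projective plane. -/
def PGChar (M : Matroid α) (P : Set α) (f : α → Submodule F (Fin 3 → F)) : Prop :=
  ∀ I ⊆ P, (M.Indep I ↔ I.Finite ∧ Module.finrank F ↥(⨆ x ∈ I, f x) = I.ncard)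

lemma pg_indep_singleton (hchar : PGChar M P f)
    (hf1 : ∀ x ∈ P, Module.finrank F (f x) = 1) {x : α} (hx : x ∈ P) : M.Indep {x} := by
  rw [hchar {x} (Set.singleton_subset_iff.mpr hx)]
  refine ⟨Set.finite_singleton x, ?_⟩
  rw [iSup_singleton, Set.ncard_singleton]
  exact hf1 x hx

lemma pg_indep_pair (hchar : PGChar M P f)
    (hf1 : ∀ x ∈ P, Module.finrank F (f x) = 1) (hfinj : Set.InjOn f P)
    {x y : α} (hx : x ∈ P) (hy : y ∈ P) (hxy : x ≠ y) : M.Indep {x, y} := by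
  rw [hchar {x, y} (Set.pair_subset hx hy)]
  refine ⟨Set.toFinite _, ?_⟩
  have hne : f x ≠ f y := fun h => hxy (hfinj hx hy h)
  have : (⨆ z ∈ ({x, y} : Set α), f z) = f x ⊔ f y := by rw [iSup_insert, iSup_singleton]
  rw [this, Set.ncard_pair hxy, finrank_sup_eq_two (hf1 x hx) (hf1 y hy) hne]

lemma pg_dep_triple (hchar : PGChar M P f)
    (hf1 : ∀ x ∈ P, Module.finrank F (f x) = 1)
    {x y z : α} (hx : x ∈ P) (hy : y ∈ P) (hz : z ∈ P)
    (hxy : x ≠ y) (hxz : x ≠ z) (hyz : y ≠ z) (hle : f z ≤ f x ⊔ f y) :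
    ¬ M.Indep {x, y, z} := by
  intro hind
  have hsub : ({x, y, z} : Set α) ⊆ P := by
    intro w hw
    rcases hw with rfl | rfl | rfl <;> assumption
  have h := (hchar _ hsub).mp hind
  have hcard : ({x, y, z} : Set α).ncard = 3 :=
    Set.ncard_eq_three.mpr ⟨x, y, z, hxy, hxz, hyz, rfl⟩
  have hsup : (⨆ w ∈ ({x, y, z} : Set α), f w) = f x ⊔ (f y ⊔ f z) := by
    rw [iSup_insert, iSup_insert, iSup_singleton]
  have heq : f x ⊔ (f y ⊔ f z) = f x ⊔ f y := by
    rw [← sup_assoc]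
    exact sup_eq_left.mpr hle
  rw [hsup, heq, hcard] at h
  have h2 : Module.finrank F ↥(f x ⊔ f y) ≤ 2 := by
    rcases eq_or_ne (f x) (f y) with hfe | hfe
    · rw [hfe, sup_idem, hf1 y hy]; omega
    · rw [finrank_sup_eq_two (hf1 x hx) (hf1 y hy) hfe]
  omega

lemma pg_indep_ncard_le3 (hchar : PGChar M P f) {I : Set α} (hI : M.Indep I) (hIP : I ⊆ P) :
    I.ncard ≤ 3 := by
  have h := (hchar I hIP).mp hI
  rw [← h.2]
  have := Submodule.finrank_le (⨆ x ∈ I, f x)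
  rwa [Module.finrank_fin_fun] at this

lemma pg_card_ge (hsurj : Set.SurjOn f P {W : Submodule F (Fin 3 → F) | Module.finrank F W = 1})
    (hfinj : Set.InjOn f P) (hPfin : P.Finite) :
    Fintype.card F ^ 2 + Fintype.card F + 1 ≤ P.ncard := by
  classical
  have hex : ∀ t : (F × F) ⊕ (Option F), ∃ x ∈ P, f x = Submodule.span F {vec3 F t} := by
    intro t
    exact hsurj (vec3_span_finrank t)
  choose g hgP hgf using hex
  have hginj : Function.Injective g := by
    intro t t' h
    apply vec3_span_inj (F := F)
    simp only
    rw [← hgf t, ← hgf t', h]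
  calc Fintype.card F ^ 2 + Fintype.card F + 1
      = (Set.univ : Set ((F × F) ⊕ (Option F))).ncard := by
        rw [Set.ncard_univ, Nat.card_eq_fintype_card]
        simp only [Fintype.card_sum, Fintype.card_prod, Fintype.card_option, sq]
        ring
    _ ≤ P.ncard := Set.ncard_le_ncard_of_injOn g (fun t _ => hgP t)
        (hginj.injOn) hPfin

lemma pg_exists_triple (hchar : PGChar M P f)
    (hsurj : Set.SurjOn f P {W : Submodule F (Fin 3 → F) | Module.finrank F W = 1})
    (hfinj : Set.InjOn f P) :
    ∃ x₀ x₁ x₂ : α, x₀ ∈ P ∧ x₁ ∈ P ∧ x₂ ∈ P ∧ x₀ ≠ x₁ ∧ x₀ ≠ x₂ ∧ x₁ ≠ x₂ ∧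
      M.Indep {x₀, x₁, x₂} := by
  classical
  obtain ⟨x₀, hx₀, hf₀⟩ := hsurj (vec3_span_finrank (F := F) (Sum.inl (0, 0)))
  obtain ⟨x₁, hx₁, hf₁⟩ := hsurj (vec3_span_finrank (F := F) (Sum.inr (some 0)))
  obtain ⟨x₂, hx₂, hf₂⟩ := hsurj (vec3_span_finrank (F := F) (Sum.inr none))
  have hne01 : x₀ ≠ x₁ := by
    rintro rfl
    exact absurd (vec3_span_inj (hf₀.symm.trans hf₁)) (by simp)
  have hne02 : x₀ ≠ x₂ := by
    rintro rfl
    exact absurd (vec3_span_inj (hf₀.symm.trans hf₂)) (by simp)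
  have hne12 : x₁ ≠ x₂ := by
    rintro rfl
    exact absurd (vec3_span_inj (hf₁.symm.trans hf₂)) (by simp)
  refine ⟨x₀, x₁, x₂, hx₀, hx₁, hx₂, hne01, hne02, hne12, ?_⟩
  have hsub : ({x₀, x₁, x₂} : Set α) ⊆ P := by
    intro w hw
    rcases hw with rfl | rfl | rfl <;> assumption
  rw [hchar _ hsub]
  refine ⟨Set.toFinite _, ?_⟩
  have hsup : (⨆ w ∈ ({x₀, x₁, x₂} : Set α), f w) = f x₀ ⊔ (f x₁ ⊔ f x₂) := by
    rw [iSup_insert, iSup_insert, iSup_singleton]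
  have hcard : ({x₀, x₁, x₂} : Set α).ncard = 3 :=
    Set.ncard_eq_three.mpr ⟨x₀, x₁, x₂, hne01, hne02, hne12, rfl⟩
  rw [hsup, hcard, hf₀, hf₁, hf₂]
  have : vec3 F (Sum.inl ((0 : F), (0 : F))) = ![1,0,0] := rfl
  rw [this]
  have h1 : vec3 F (Sum.inr (some (0 : F))) = ![0,1,0] := by
    funext i; fin_cases i <;> simp [vec3]
  have h2 : vec3 F (Sum.inr (none : Option F)) = ![0,0,1] := rfl
  rw [h1, h2, ← sup_assoc, span_std_triple_top, finrank_top, Module.finrank_fin_fun]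

lemma pg_line_bound (hchar : PGChar M P f)
    (hf1 : ∀ x ∈ P, Module.finrank F (f x) = 1) (hfinj : Set.InjOn f P)
    {X : Set α} (hXP : X ⊆ P)
    (hdep : ∀ x ∈ X, ∀ y ∈ X, ∀ z ∈ X, x ≠ y → x ≠ z → y ≠ z → ¬ M.Indep {x, y, z}) :
    X.ncard ≤ Fintype.card F + 1 := by
  classical
  by_cases hex : ∃ x ∈ X, ∃ y ∈ X, x ≠ y
  · obtain ⟨x, hx, y, hy, hxy⟩ := hex
    have hfx1 := hf1 x (hXP hx)
    have hfy1 := hf1 y (hXP hy)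
    obtain ⟨v, hv0, hvspan⟩ := exists_span_eq hfx1
    obtain ⟨w, hw0, hwspan⟩ := exists_span_eq hfy1
    have hfne : f x ≠ f y := fun h => hxy (hfinj (hXP hx) (hXP hy) h)
    have hrk2 : Module.finrank F ↥(f x ⊔ f y) = 2 := finrank_sup_eq_two hfx1 hfy1 hfne
    have hle : ∀ z ∈ X, f z ≤ f x ⊔ f y := by
      intro z hz
      rcases eq_or_ne z x with rfl | hzx
      · exact le_sup_left
      rcases eq_or_ne z y with rfl | hzy
      · exact le_sup_right
      have hnind := hdep x hx y hy z hz hxy (Ne.symm hzx) (Ne.symm hzy)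
      have hsub : ({x, y, z} : Set α) ⊆ P := by
        intro u hu; rcases hu with rfl | rfl | rfl
        · exact hXP hx
        · exact hXP hy
        · exact hXP hz
      have hfin3 : Module.finrank F ↥(f x ⊔ f y ⊔ f z) ≠ 3 := by
        intro h3
        apply hnind
        rw [hchar _ hsub]
        refine ⟨Set.toFinite _, ?_⟩
        have hsup : (⨆ u ∈ ({x, y, z} : Set α), f u) = f x ⊔ (f y ⊔ f z) := by
          rw [iSup_insert, iSup_insert, iSup_singleton]
        have hcard : ({x, y, z} : Set α).ncard = 3 :=
          Set.ncard_eq_three.mpr ⟨x, y, z, hxy, Ne.symm hzx, Ne.symm hzy, rfl⟩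
        rw [hsup, hcard, ← sup_assoc]
        exact h3
      have hble : Module.finrank F ↥(f x ⊔ f y ⊔ f z) ≤ 3 := by
        have := Submodule.finrank_le (f x ⊔ f y ⊔ f z)
        rwa [Module.finrank_fin_fun] at this
      have hge : Module.finrank F ↥(f x ⊔ f y) ≤ Module.finrank F ↥(f x ⊔ f y ⊔ f z) :=
        Submodule.finrank_mono le_sup_left
      have heq : f x ⊔ f y = f x ⊔ f y ⊔ f z :=
        Submodule.eq_of_le_of_finrank_le le_sup_left (by omega)
      rw [heq]
      exact le_sup_right
    refine card_bound_of_subset_sup (w₁ := v) (w₂ := w)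
      (fun z hz => hf1 z (hXP hz)) (fun z hz => by rw [← hvspan, ← hwspan]; exact hle z hz)
      (hfinj.mono hXP)
  · push_neg at hex
    have hsub : X.Subsingleton := fun a ha b hb => hex a ha b hb
    calc X.ncard ≤ 1 := by
          rcases Set.Subsingleton.eq_empty_or_singleton hsub with rfl | ⟨a, rfl⟩
          · simp
          · simp
      _ ≤ Fintype.card F + 1 := by omega

end PGFacts
section Step1

variable {α : Type*}

lemma exists_contract_set (M : Matroid α) [M.Finite] (hround : Round M)
    (L P : Set α) (hL : L ⊆ M.E) (hP : P ⊆ M.E)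
    (hrkL : ∀ I, M.Indep I → I ⊆ L → I.ncard ≤ 2)
    (hI₃ : ∃ I₃ ⊆ P, M.Indep I₃ ∧ I₃.ncard = 3) :
    ∃ C : Set α, C ⊆ M.E ∧ Disjoint C (P ∪ L) ∧
      (∀ I, I ⊆ P → M.Indep I → M.Indep (I ∪ C)) ∧
      (∀ I, I ⊆ L → M.Indep I → M.Indep (I ∪ C)) ∧
      M.E ⊆ M.closure (P ∪ C) := by
  classical
  have hEfin : M.E.Finite := M.ground_finite
  set Qset := {C : Set α | C ⊆ M.E ∧ Disjoint C (P ∪ L) ∧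
      (∀ I, I ⊆ P → M.Indep I → M.Indep (I ∪ C)) ∧
      (∀ I, I ⊆ L → M.Indep I → M.Indep (I ∪ C))} with hQdef
  have hne : Qset.Nonempty := ⟨∅, Set.empty_subset _, Set.disjoint_left.mpr (by simp),
    fun I _ hI => by rwa [Set.union_empty], fun I _ hI => by rwa [Set.union_empty]⟩
  have hfin : Qset.Finite := hEfin.finite_subsets.subset fun C hC => hC.1
  obtain ⟨C, hC, hmax⟩ := Set.Finite.exists_maximalFor Set.ncard Qset hfin hne
  obtain ⟨hCE, hCdisj, hCP, hCL⟩ := hC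
  have hCfin : C.Finite := hEfin.subset hCE
  refine ⟨C, hCE, hCdisj, hCP, hCL, ?_⟩
  by_contra hnspan
  rw [Set.not_subset] at hnspan
  obtain ⟨e₀, he₀E, he₀cl⟩ := hnspan
  by_cases hcase : ∃ e ∈ M.E, e ∉ M.closure (P ∪ C) ∧ e ∉ M.closure (L ∪ C)
  · obtain ⟨e, heE, hePC, heLC⟩ := hcase
    have heC : e ∉ C := fun h =>
      hePC (M.subset_closure (P ∪ C) (Set.union_subset hP hCE) (Set.mem_union_right _ h))
    have heP : e ∉ P := fun h =>
      hePC (M.subset_closure (P ∪ C) (Set.union_subset hP hCE) (Set.mem_union_left _ h))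
    have heL : e ∉ L := fun h =>
      heLC (M.subset_closure (L ∪ C) (Set.union_subset hL hCE) (Set.mem_union_left _ h))
    have hQ' : insert e C ∈ Qset := by
      refine ⟨Set.insert_subset heE hCE, ?_, ?_, ?_⟩
      · refine Set.disjoint_left.mpr ?_
        rintro y (rfl | hyC)
        · exact fun h => h.elim heP heL
        · exact Set.disjoint_left.mp hCdisj hyC
      · intro I hIP hIind
        have h1 := hCP I hIP hIind
        rw [Set.union_insert]
        refine (h1.insert_indep_iff_of_notMem ?_).mpr
          ⟨heE, fun hecl => hePC (M.closure_subset_closure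
            (Set.union_subset_union_left C hIP) hecl)⟩
        exact fun h => h.elim (fun hI => heP (hIP hI)) heC
      · intro I hIL hIind
        have h1 := hCL I hIL hIind
        rw [Set.union_insert]
        refine (h1.insert_indep_iff_of_notMem ?_).mpr
          ⟨heE, fun hecl => heLC (M.closure_subset_closure
            (Set.union_subset_union_left C hIL) hecl)⟩
        exact fun h => h.elim (fun hI => heL (hIL hI)) heC
    have hcard : C.ncard < (insert e C).ncard := by
      rw [Set.ncard_insert_of_notMem heC hCfin]
      omega
    have := hmax hQ' hcard.le
    omega
  · push_neg at hcase
    set A := M.closure (P ∪ C) with hA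
    have hCind : M.Indep C := by
      have := hCP ∅ (Set.empty_subset _) M.empty_indep
      rwa [Set.empty_union] at this
    obtain ⟨I₃, hI₃P, hI₃ind, hI₃card⟩ := hI₃
    have hIC_ind : M.Indep (I₃ ∪ C) := hCP I₃ hI₃P hI₃ind
    have hdisjI₃ : Disjoint I₃ C := Set.disjoint_right.mpr fun y hyC hyI =>
      Set.disjoint_left.mp hCdisj hyC (Set.mem_union_left _ (hI₃P hyI))
    have hICcard : (I₃ ∪ C).ncard = C.ncard + 3 := by
      rw [Set.ncard_union_eq hdisjI₃ (hEfin.subset (hI₃P.trans hP)) hCfin]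
      omega
    have hmrkA_lt : mrk M A < mrank M := mrk_lt_mrank_of_not_spanning he₀E he₀cl
    have hmrkA_ge : C.ncard + 3 ≤ mrk M A := by
      have hsub : I₃ ∪ C ⊆ A :=
        (Set.union_subset_union_left C hI₃P).trans
          (M.subset_closure (P ∪ C) (Set.union_subset hP hCE))
      have := ncard_le_mrk hIC_ind hsub
      omega
    have hB_le : mrk M (M.E \ A) ≤ C.ncard + 2 := by
      apply mrk_le
      intro I hIind hIB
      have hIcl : I ⊆ M.closure (L ∪ C) := fun y hy =>
        hcase y (hIB hy).1 (hIB hy).2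
      have h1 := ncard_le_mrk_of_subset_closure hIind hIcl
      have hLC : mrk M (L ∪ C) ≤ 2 + C.ncard := by
        apply mrk_le
        intro J hJ hJsub
        have hJL : M.Indep (J ∩ L) := hJ.subset Set.inter_subset_left
        have hJC : J \ L ⊆ C := fun y hy => ((hJsub hy.1).elim (fun h => absurd h hy.2) id)
        calc J.ncard = ((J ∩ L) ∪ (J \ L)).ncard := by rw [Set.inter_union_diff]
          _ ≤ (J ∩ L).ncard + (J \ L).ncard := Set.ncard_union_le _ _
          _ ≤ 2 + C.ncard := add_le_add (hrkL _ hJL Set.inter_subset_right)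
              (Set.ncard_le_ncard hJC hCfin)
      omega
    exact hround ⟨A, M.E \ A, Set.union_diff_cancel (M.closure_subset_ground _),
      Set.disjoint_sdiff_right, by omega, by omega⟩

end Step1

/-- A round matroid with a `U_{2,q+2}`-restriction and a `PG(2,q)`-restriction has a
`U_{2,q^2+1}`-minor. -/
theorem stmt3 {α : Type*} (M : Matroid α) [M.Finite] (F : Type) [Field F] [Fintype F]
    (hround : Round M) (L P : Set α) (hL : L ⊆ M.E) (hP : P ⊆ M.E)
    (hLu : IsUnif2 (M ↾ L) (Fintype.card F + 2)) (hPG : IsProjGeom (M ↾ P) 3 F) :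
    HasLineMinor M (Fintype.card F ^ 2 + 1) := by
  classical
  set q := Fintype.card F with hqdef
  have hEfin : M.E.Finite := M.ground_finite
  have hPfin : P.Finite := hEfin.subset hP
  have hLfin : L.Finite := hEfin.subset hL
  obtain ⟨-, hLcard, hLiff⟩ := hLu
  rw [restrict_ground_eq] at hLcard
  obtain ⟨f, hfbij, hfchar⟩ := hPG
  rw [restrict_ground_eq] at hfbij
  have hchar : PGChar M P f := by
    intro I hIP
    have := hfchar I (by rwa [restrict_ground_eq])
    rwa [restrict_indep_iff, and_iff_left hIP] at this
  have hf1 : ∀ x ∈ P, Module.finrank F (f x) = 1 := fun x hx => hfbij.mapsTo hx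
  have hfinj : Set.InjOn f P := hfbij.injOn
  have hfsurj := hfbij.surjOn
  -- facts about the line L
  have hLpair : ∀ x ∈ L, ∀ y ∈ L, M.Indep {x, y} := by
    intro x hx y hy
    have hsub : ({x, y} : Set α) ⊆ L := Set.pair_subset hx hy
    have h2 : ({x, y} : Set α).ncard ≤ 2 := (Set.ncard_insert_le x {y}).trans (by simp)
    have := (hLiff {x, y} (by rwa [restrict_ground_eq])).mpr ⟨Set.toFinite _, h2⟩
    exact (restrict_indep_iff.mp this).1
  have hrkL : ∀ I, M.Indep I → I ⊆ L → I.ncard ≤ 2 := by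
    intro I hI hIL
    exact ((hLiff I (by rwa [restrict_ground_eq])).mp (restrict_indep_iff.mpr ⟨hI, hIL⟩)).2
  -- an independent triple in P
  obtain ⟨x₀, x₁, x₂, hx₀P, hx₁P, hx₂P, h01, h02, h12, hI₃ind⟩ :=
    pg_exists_triple hchar hfsurj hfinj
  have hI₃P : ({x₀, x₁, x₂} : Set α) ⊆ P := by
    intro w hw; rcases hw with rfl | rfl | rfl <;> assumption
  have hI₃card : ({x₀, x₁, x₂} : Set α).ncard = 3 :=
    Set.ncard_eq_three.mpr ⟨x₀, x₁, x₂, h01, h02, h12, rfl⟩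
  -- Step 1: the contraction set C
  obtain ⟨C, hCE, hCdisj, hCP, hCL, hspan⟩ := exists_contract_set M hround L P hL hP hrkL
    ⟨{x₀, x₁, x₂}, hI₃P, hI₃ind, hI₃card⟩
  have hCfin : C.Finite := hEfin.subset hCE
  have hCind : M.Indep C := by
    have := hCP ∅ (Set.empty_subset _) M.empty_indep
    rwa [Set.empty_union] at this
  have hCnP : ∀ x ∈ P, x ∉ C := fun x hx hxC =>
    Set.disjoint_left.mp hCdisj hxC (Set.mem_union_left _ hx)
  have hCnL : ∀ x ∈ L, x ∉ C := fun x hx hxC =>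
    Set.disjoint_left.mp hCdisj hxC (Set.mem_union_right _ hx)
  have hins1 : ∀ x ∈ P, M.Indep (insert x C) := by
    intro x hx
    have := hCP {x} (Set.singleton_subset_iff.mpr hx) (pg_indep_singleton hchar hf1 hx)
    rwa [Set.singleton_union] at this
  have hins2 : ∀ x ∈ P, ∀ y ∈ P, x ≠ y → M.Indep (insert x (insert y C)) := by
    intro x hx y hy hxy
    have := hCP {x, y} (Set.pair_subset hx hy) (pg_indep_pair hchar hf1 hfinj hx hy hxy)
    rwa [Set.insert_union, Set.singleton_union] at this
  have hinsL1 : ∀ x ∈ L, M.Indep (insert x C) := by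
    intro x hx
    have := hCL {x} (Set.singleton_subset_iff.mpr hx)
      ((hLpair x hx x hx).subset (by simp))
    rwa [Set.singleton_union] at this
  have hinsL2 : ∀ x ∈ L, ∀ y ∈ L, x ≠ y → M.Indep (insert x (insert y C)) := by
    intro x hx y hy hxy
    have := hCL {x, y} (Set.pair_subset hx hy) (hLpair x hx y hy)
    rwa [Set.insert_union, Set.singleton_union] at this
  -- Step 2: the rank of M
  have hPcl : P ⊆ M.closure {x₀, x₁, x₂} := by
    intro x hx
    by_cases hxI : x ∈ ({x₀, x₁, x₂} : Set α)
    · exact M.mem_closure_of_mem' hxI (hP hx)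
    · refine (hI₃ind.mem_closure_iff_of_notMem hxI).mpr ?_
      rw [Matroid.dep_iff]
      refine ⟨fun hind => ?_, Set.insert_subset (hP hx) (hI₃P.trans hP)⟩
      have hle3 := pg_indep_ncard_le3 hchar hind (Set.insert_subset hx hI₃P)
      rw [Set.ncard_insert_of_notMem hxI (hEfin.subset (hI₃P.trans hP)), hI₃card] at hle3
      omega
  have hbase : M.IsBase ({x₀, x₁, x₂} ∪ C) := by
    refine (hCP _ hI₃P hI₃ind).isBase_of_ground_subset_closure ?_
    refine hspan.trans (M.closure_subset_closure_of_subset_closure ?_)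
    intro w hw
    rcases hw with hw | hw
    · exact M.closure_subset_closure Set.subset_union_left (hPcl hw)
    · exact M.subset_closure _ (Set.union_subset (hI₃P.trans hP) hCE) (Set.mem_union_right _ hw)
  have hI₃Cdisj : Disjoint ({x₀, x₁, x₂} : Set α) C :=
    Set.disjoint_right.mpr fun y hyC hyI => hCnP y (hI₃P hyI) hyC
  have hrank : mrank M = C.ncard + 3 := by
    rw [mrank_eq_ncard_base hbase,
      Set.ncard_union_eq hI₃Cdisj (hEfin.subset (hI₃P.trans hP)) hCfin, hI₃card]
    omega
  have hIbound : ∀ I, M.Indep I → I.ncard ≤ C.ncard + 3 := by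
    intro I hI
    have h := ncard_le_mrk hI hI.subset_ground
    have : mrk M M.E = mrank M := rfl
    omega
  have hmrkLC : mrk M (L ∪ C) ≤ 2 + C.ncard := by
    apply mrk_le
    intro J hJ hJsub
    have hJL : M.Indep (J ∩ L) := hJ.subset Set.inter_subset_left
    have hJC : J \ L ⊆ C := fun y hy => ((hJsub hy.1).elim (fun h => absurd h hy.2) id)
    calc J.ncard = ((J ∩ L) ∪ (J \ L)).ncard := by rw [Set.inter_union_diff]
      _ ≤ (J ∩ L).ncard + (J \ L).ncard := Set.ncard_union_le _ _
      _ ≤ 2 + C.ncard := add_le_add (hrkL _ hJL Set.inter_subset_right)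
          (Set.ncard_le_ncard hJC hCfin)
  -- Step 3: choose a good point p on the line
  set Bad := {x ∈ L | ∃ y ∈ P, y ∈ M.closure (insert x C)} with hBaddef
  set Wit := {y ∈ P | y ∈ M.closure (L ∪ C)} with hWitdef
  have hWitdep : ∀ x ∈ Wit, ∀ y ∈ Wit, ∀ z ∈ Wit, x ≠ y → x ≠ z → y ≠ z →
      ¬ M.Indep {x, y, z} := by
    rintro x ⟨hxP, hxcl⟩ y ⟨hyP, hycl⟩ z ⟨hzP, hzcl⟩ hxy hxz hyz hind
    have hsubP : ({x, y, z} : Set α) ⊆ P := by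
      intro w hw; rcases hw with rfl | rfl | rfl <;> assumption
    have hindC : M.Indep ({x, y, z} ∪ C) := hCP _ hsubP hind
    have hsubcl : {x, y, z} ∪ C ⊆ M.closure (L ∪ C) := by
      rintro w (hw | hw)
      · rcases hw with rfl | rfl | rfl <;> assumption
      · exact M.subset_closure _ (Set.union_subset hL hCE) (Set.mem_union_right _ hw)
    have h1 := ncard_le_mrk_of_subset_closure hindC hsubcl
    have hdisj : Disjoint ({x, y, z} : Set α) C :=
      Set.disjoint_right.mpr fun w hwC hwI => hCnP w (hsubP hwI) hwC
    have hcard3 : ({x, y, z} : Set α).ncard = 3 :=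
      Set.ncard_eq_three.mpr ⟨x, y, z, hxy, hxz, hyz, rfl⟩
    rw [Set.ncard_union_eq hdisj (hEfin.subset (hsubP.trans hP)) hCfin, hcard3] at h1
    omega
  have hWitle : Wit.ncard ≤ q + 1 :=
    pg_line_bound hchar hf1 hfinj (Set.sep_subset _ _) hWitdep
  have hBadle : Bad.ncard ≤ Wit.ncard := by
    have hw : ∀ x ∈ Bad, ∃ y, y ∈ P ∧ y ∈ M.closure (insert x C) := fun x hx => by
      obtain ⟨y, hy1, hy2⟩ := hx.2; exact ⟨y, hy1, hy2⟩
    choose! g hg1 hg2 using hw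
    refine Set.ncard_le_ncard_of_injOn g (fun x hx => ⟨hg1 x hx, ?_⟩) ?_
      (hPfin.subset (Set.sep_subset _ _))
    · refine M.closure_subset_closure ?_ (hg2 x hx)
      exact Set.insert_subset (Set.mem_union_left _ hx.1) Set.subset_union_right
    · intro x hx x' hx' hgg
      by_contra hne
      have hy1 : g x ∈ P := hg1 x hx
      have hy2 : g x ∈ M.closure (insert x C) := hg2 x hx
      have hy2' : g x ∈ M.closure (insert x' C) := by rw [hgg]; exact hg2 x' hx'
      have hxL : x ∈ L := hx.1
      have hx'L : x' ∈ L := hx'.1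
      have hx'cl : x' ∈ M.closure (insert x C) := by
        rcases eq_or_ne (g x) x' with heq | hyx'
        · exact heq ▸ hy2
        · have hynC : g x ∉ C := hCnP _ hy1
          have hynclC : g x ∉ M.closure C := by
            have := (hCind.insert_indep_iff_of_notMem hynC).mp (hins1 _ hy1)
            exact this.2
          have hex := Matroid.closure_exchange (X := C) (e := g x) (f := x') ⟨hy2', hynclC⟩
          have hsub : M.closure (insert (g x) C) ⊆ M.closure (insert x C) :=
            M.closure_subset_closure_of_subset_closure
              (Set.insert_subset hy2 ((Set.subset_insert x C).trans
                (M.subset_closure (insert x C) (Set.insert_subset (hL hxL) hCE))))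
          exact hsub hex.1
      have hx'mem : x' ∉ insert x C :=
        fun h => h.elim (fun h' => hne (h'.symm ▸ rfl)) (hCnL x' hx'L)
      exact absurd (hinsL2 x' hx'L x hxL (Ne.symm hne))
        (((hinsL1 x hxL).mem_closure_iff_of_notMem hx'mem).mp hx'cl).not_indep
  have hBadfin : Bad.Finite := hLfin.subset (Set.sep_subset _ _)
  obtain ⟨p, hpL, hpBad⟩ : ∃ p ∈ L, p ∉ Bad := by
    by_contra h
    push_neg at h
    have hsub : L ⊆ Bad := h
    have := Set.ncard_le_ncard hsub hBadfin
    omega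
  have hpgood : ∀ y ∈ P, y ∉ M.closure (insert p C) := by
    intro y hy hmem
    exact hpBad ⟨hpL, y, hy, hmem⟩
  have hpP : p ∉ P := fun h =>
    hpgood p h (M.mem_closure_of_mem' (Set.mem_insert _ _) (hL hpL))
  have hpC : p ∉ C := hCnL p hpL
  have hpCi : M.Indep (insert p C) := hinsL1 p hpL
  have hgoodpair : ∀ x ∈ P, M.Indep (insert x (insert p C)) := by
    intro x hx
    have hxmem : x ∉ insert p C := fun h => h.elim (fun h' => hpP (h' ▸ hx)) (hCnP x hx)
    exact (hpCi.insert_indep_iff_of_notMem hxmem).mpr ⟨hP hx, hpgood x hx⟩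
  -- Step 4: the flats `Fl x` and the exceptional set S
  set Fl : α → Set α := fun x => M.closure (insert x (insert p C)) with hFldef
  have hFlE : ∀ x ∈ P, insert x (insert p C) ⊆ M.E :=
    fun x hx => Set.insert_subset (hP hx) (Set.insert_subset (hL hpL) hCE)
  have hmemFl : ∀ x ∈ P, x ∈ Fl x := fun x hx =>
    M.subset_closure _ (hFlE x hx) (Set.mem_insert _ _)
  have hCFl : ∀ x ∈ P, insert p C ⊆ Fl x := fun x hx =>
    (Set.subset_insert x _).trans (M.subset_closure _ (hFlE x hx))
  have hSL1 : ∀ x ∈ P, ∀ z ∈ P, z ∈ Fl x → Fl x = Fl z := by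
    intro x hx z hz hzFl
    rcases eq_or_ne z x with rfl | hne
    · rfl
    have hznp : z ∉ M.closure (insert p C) := hpgood z hz
    have hzFl2 : z ∈ M.closure (insert x (insert p C)) := hzFl
    have hx' : x ∈ M.closure (insert z (insert p C)) :=
      (Matroid.closure_exchange (X := insert p C) (e := z) (f := x) ⟨hzFl2, hznp⟩).1
    apply subset_antisymm
    · exact M.closure_subset_closure_of_subset_closure
        (Set.insert_subset hx' (hCFl z hz))
    · exact M.closure_subset_closure_of_subset_closure
        (Set.insert_subset hzFl (hCFl x hx))
  have hSL2 : ∀ x ∈ P, ∀ y ∈ P, ∀ x' ∈ P, x ≠ y → y ∈ Fl x → f x' ≤ f x ⊔ f y →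
      x' ∈ Fl x := by
    intro x hx y hy x' hx' hxy hyFl hle
    rcases eq_or_ne x' x with rfl | hne1
    · exact hmemFl x' hx'
    rcases eq_or_ne x' y with rfl | hne2
    · exact hyFl
    have hxyC : M.Indep (insert y (insert x C)) := hins2 y hy x hx (Ne.symm hxy)
    have hynmem : y ∉ insert x C := fun h => h.elim (fun h' => hxy h'.symm) (hCnP y hy)
    have hynCx : y ∉ M.closure (insert x C) :=
      (((hins1 x hx).insert_indep_iff_of_notMem hynmem).mp hxyC).2
    have hyFl' : y ∈ M.closure (insert p (insert x C)) := by
      have h2 : y ∈ M.closure (insert x (insert p C)) := hyFl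
      rwa [Set.insert_comm] at h2
    have hp' : p ∈ M.closure (insert y (insert x C)) :=
      (Matroid.closure_exchange (X := insert x C) (e := y) (f := p) ⟨hyFl', hynCx⟩).1
    have hx'nmem : x' ∉ insert y (insert x C) := by
      rintro (rfl | rfl | h)
      · exact hne2 rfl
      · exact hne1 rfl
      · exact hCnP x' hx' h
    have hdep : ¬ M.Indep {x, y, x'} :=
      pg_dep_triple hchar hf1 hx hy hx' hxy (Ne.symm hne1) (Ne.symm hne2) hle
    have hx'cl : x' ∈ M.closure (insert y (insert x C)) := by
      by_contra hnot
      have hind4 : M.Indep (insert x' (insert y (insert x C))) :=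
        (hxyC.insert_indep_iff_of_notMem hx'nmem).mpr ⟨hP hx', hnot⟩
      refine hdep (hind4.subset ?_)
      intro w hw
      rcases hw with rfl | rfl | rfl <;> simp
    have hfin : M.closure (insert y (insert x C)) ⊆ Fl x :=
      M.closure_subset_closure_of_subset_closure
        (Set.insert_subset hyFl (Set.insert_subset (hmemFl x hx)
          ((Set.subset_insert p C).trans (hCFl x hx))))
    exact hfin hx'cl
  set S := {x ∈ P | ∃ y ∈ P, y ≠ x ∧ y ∈ Fl x} with hSdef
  have hSP : S ⊆ P := Set.sep_subset _ _
  have hLemB : ∀ x ∈ S, ∀ x' ∈ S, x' ∈ Fl x := by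
    rintro x ⟨hxP, y, hyP, hyne, hyFl⟩ x' ⟨hx'P, y', hy'P, hy'ne, hy'Fl⟩
    have hW1 : Module.finrank F ↥(f x ⊔ f y) = 2 :=
      finrank_sup_eq_two (hf1 x hxP) (hf1 y hyP)
        (fun h => hyne (hfinj hyP hxP h.symm))
    have hW2 : Module.finrank F ↥(f x' ⊔ f y') = 2 :=
      finrank_sup_eq_two (hf1 x' hx'P) (hf1 y' hy'P)
        (fun h => hy'ne (hfinj hy'P hx'P h.symm))
    obtain ⟨U, hU1, hUW1, hUW2⟩ := exists_line_in_inf (Module.finrank_fin_fun F) hW1 hW2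
    obtain ⟨z, hzP, hfz⟩ := hfsurj hU1
    have hz1 : z ∈ Fl x := hSL2 x hxP y hyP z hzP (Ne.symm hyne) hyFl
      (by rw [hfz]; exact hUW1)
    have hz2 : z ∈ Fl x' := hSL2 x' hx'P y' hy'P z hzP (Ne.symm hy'ne) hy'Fl
      (by rw [hfz]; exact hUW2)
    rw [hSL1 x hxP z hzP hz1, ← hSL1 x' hx'P z hzP hz2]
    exact hmemFl x' hx'P
  have hScard : S.ncard ≤ q + 1 := by
    rcases Set.eq_empty_or_nonempty S with hS | ⟨s₀, hs₀⟩
    · rw [hS]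
      simp
    · refine pg_line_bound hchar hf1 hfinj hSP ?_
      intro x hx y hy z hz hxy hxz hyz hind
      have hsubP : ({x, y, z} : Set α) ⊆ P := by
        intro w hw; rcases hw with rfl | rfl | rfl
        exacts [hSP hx, hSP hy, hSP hz]
      have hindC : M.Indep ({x, y, z} ∪ C) := hCP _ hsubP hind
      have hsubcl : {x, y, z} ∪ C ⊆ M.closure (insert s₀ (insert p C)) := by
        rintro w (hw | hw)
        · rcases hw with rfl | rfl | rfl
          exacts [hLemB s₀ hs₀ _ hx, hLemB s₀ hs₀ _ hy, hLemB s₀ hs₀ _ hz]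
        · exact hCFl s₀ (hSP hs₀) (Set.mem_insert_of_mem _ hw)
      have h1 := ncard_le_mrk_of_subset_closure hindC hsubcl
      have h2 : mrk M (insert s₀ (insert p C)) ≤ C.ncard + 2 := by
        refine (mrk_le_ncard _ (((hEfin.subset hCE).insert p).insert s₀)).trans ?_
        have ha := Set.ncard_insert_le s₀ (insert p C)
        have hb := Set.ncard_insert_le p C
        omega
      have hdisj : Disjoint ({x, y, z} : Set α) C :=
        Set.disjoint_right.mpr fun w hwC hwI => hCnP w (hsubP hwI) hwC
      have hcard3 : ({x, y, z} : Set α).ncard = 3 :=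
        Set.ncard_eq_three.mpr ⟨x, y, z, hxy, hxz, hyz, rfl⟩
      rw [Set.ncard_union_eq hdisj (hEfin.subset (hsubP.trans hP)) hCfin, hcard3] at h1
      omega
  -- Step 5: the set R
  have hPcard : q ^ 2 + q + 1 ≤ P.ncard := pg_card_ge hfsurj hfinj hPfin
  obtain ⟨R1, hR1P, hR1card, hR1pair⟩ :
      ∃ R1 : Set α, R1 ⊆ P ∧ q ^ 2 + 1 ≤ R1.ncard ∧
        (∀ x ∈ R1, ∀ y ∈ R1, x ≠ y → y ∉ Fl x) := by
    rcases Set.eq_empty_or_nonempty S with hS | ⟨s₀, hs₀⟩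
    · refine ⟨P, Set.Subset.rfl, by omega, ?_⟩
      intro x hx y hy hxy hyFl
      have : x ∈ S := ⟨hx, y, hy, Ne.symm hxy, hyFl⟩
      rw [hS] at this
      exact this
    · refine ⟨(P \ S) ∪ {s₀}, Set.union_subset Set.diff_subset
        (Set.singleton_subset_iff.mpr (hSP hs₀)), ?_, ?_⟩
      · have hdiff : (P \ S).ncard = P.ncard - S.ncard := Set.ncard_diff hSP (hPfin.subset hSP)
        have hs₀nd : s₀ ∉ P \ S := fun h => h.2 hs₀
        have hcu : ((P \ S) ∪ {s₀}).ncard = (P \ S).ncard + 1 := by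
          rw [Set.union_singleton,
            Set.ncard_insert_of_notMem hs₀nd (hPfin.subset Set.diff_subset)]
        omega
      · intro x hx y hy hxy hyFl
        have hxP2 : x ∈ P := by
          rcases hx with hx | hx
          · exact hx.1
          · exact hx ▸ hSP hs₀
        have hyP2 : y ∈ P := by
          rcases hy with hy | hy
          · exact hy.1
          · exact hy ▸ hSP hs₀
        have hxS : x ∈ S := ⟨hxP2, y, hyP2, Ne.symm hxy, hyFl⟩
        rcases hx with hx | hx
        · exact hx.2 hxS
        · have hyS : y ∈ S := by
            have heq := hSL1 x hxP2 y hyP2 hyFl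
            refine ⟨hyP2, x, hxP2, hxy, ?_⟩
            rw [← heq]
            exact hmemFl x hxP2
          rcases hy with hy | hy
          · exact hy.2 hyS
          · exact hxy (hx.trans hy.symm)
  obtain ⟨R, hRsub, hRcard⟩ := Set.exists_subset_card_eq hR1card
  have hRP : R ⊆ P := hRsub.trans hR1P
  have hRpair : ∀ x ∈ R, ∀ y ∈ R, x ≠ y → y ∉ Fl x :=
    fun x hx y hy hxy => hR1pair x (hRsub hx) y (hRsub hy) hxy
  -- Step 6: conclusion
  refine ⟨insert p C, M.E \ (insert p C ∪ R), ?_⟩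
  have hRE : R ⊆ M.E := hRP.trans hP
  have hRC' : ∀ x ∈ R, x ∉ insert p C := fun x hx h =>
    h.elim (fun h' => hpP (h' ▸ hRP hx)) (hCnP x (hRP hx))
  have hgr : (M.E \ insert p C) \ (M.E \ (insert p C ∪ R)) = R := by
    ext y
    constructor
    · rintro ⟨⟨hyE, hyC⟩, hyD⟩
      by_contra hyR
      exact hyD ⟨hyE, fun h => h.elim hyC hyR⟩
    · intro hyR
      exact ⟨⟨hRE hyR, hRC' y hyR⟩, fun h => h.2 (Or.inr hyR)⟩
  have hNE : (mdelete (mcontract M (insert p C)) (M.E \ (insert p C ∪ R))).E = R := hgr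
  refine ⟨?_, ?_, ?_⟩
  · rw [hNE]
    exact hEfin.subset hRE
  · rw [hNE, hRcard]
  · intro I hI
    rw [hNE] at hI
    have hIndep : (mdelete (mcontract M (insert p C)) (M.E \ (insert p C ∪ R))).Indep I ↔
        (mcontract M (insert p C)).Indep I ∧ I ⊆ R := by
      have h0 : (mdelete (mcontract M (insert p C)) (M.E \ (insert p C ∪ R))).Indep I ↔
          (mcontract M (insert p C)).Indep I ∧
            I ⊆ (M.E \ insert p C) \ (M.E \ (insert p C ∪ R)) := restrict_indep_iff
      rwa [hgr] at h0
    rw [hIndep, mcontract_indep_iff hpCi]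
    constructor
    · rintro ⟨⟨hIE, hIC⟩, hIR⟩
      have hIfin : I.Finite := hEfin.subset (hIR.trans hRE)
      refine ⟨hIfin, ?_⟩
      have hb := hIbound _ hIC
      have hdisj : Disjoint I (insert p C) := Set.disjoint_left.mpr fun y hy => (hIE hy).2
      rw [Set.ncard_union_eq hdisj hIfin (hCfin.insert p),
        Set.ncard_insert_of_notMem hpC hCfin] at hb
      omega
    · rintro ⟨hIfin, hIle⟩
      refine ⟨⟨fun y hy => ⟨hRE (hI hy), hRC' y (hI hy)⟩, ?_⟩, hI⟩
      have hcases : I.ncard = 0 ∨ I.ncard = 1 ∨ I.ncard = 2 := by omega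
      rcases hcases with h0 | h1 | h2
      · obtain rfl := (Set.ncard_eq_zero hIfin).mp h0
        rw [Set.empty_union]
        exact hpCi
      · obtain ⟨x, rfl⟩ := Set.ncard_eq_one.mp h1
        rw [Set.singleton_union]
        exact hgoodpair x (hRP (hI rfl))
      · obtain ⟨x, y, hxy, rfl⟩ := Set.ncard_eq_two.mp h2
        have hxR : x ∈ R := hI (by simp)
        have hyR : y ∈ R := hI (by simp)
        have hxPi : x ∈ P := hRP hxR
        have hyPi : y ∈ P := hRP hyR
        have hnotFl : x ∉ Fl y := hRpair y hyR x hxR (Ne.symm hxy)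
        have hbase2 : M.Indep (insert y (insert p C)) := hgoodpair y hyPi
        have hxnmem : x ∉ insert y (insert p C) := by
          rintro (rfl | rfl | h)
          · exact hxy rfl
          · exact hpP hxPi
          · exact hCnP x hxPi h
        have hfinal := (hbase2.insert_indep_iff_of_notMem hxnmem).mpr ⟨hP hxPi, hnotFl⟩
        rw [Set.insert_union, Set.singleton_union]
        exact hfinal
end

section
/- Let f : ℕ → ℤ be a function with f(1) ≥ 1 and f(k) ≥ 2f(k−1) − 1 for all k ≥ 1. If M is a matroid with r(M) ≥ 1 and ε(M) ≥ f(r(M)), then M has a round restriction N with r(N) ≥ 1 and ε(N) ≥ f(r(N)). -/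
open Matroid Set

section helpers
variable {α : Type*} {M : Matroid α} {X Y A B I J P Q : Set α} {e g : α}

lemma indep_nonempty (M : Matroid α) (X : Set α) :
    Nonempty {I : Set α // M.Indep I ∧ I ⊆ X} := ⟨⟨∅, M.empty_indep, empty_subset X⟩⟩

lemma mrk_bdd [M.Finite] (X : Set α) :
    BddAbove (Set.range fun I : {I : Set α // M.Indep I ∧ I ⊆ X} => I.1.ncard) := by
  refine ⟨M.E.ncard, ?_⟩
  rintro n ⟨I, rfl⟩
  exact ncard_le_ncard I.2.1.subset_ground M.ground_finite

lemma ncard_le_mrk_s6 [M.Finite] (hJ : M.Indep J) (hJX : J ⊆ X) : J.ncard ≤ mrk M X :=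
  le_ciSup (mrk_bdd X) (⟨J, hJ, hJX⟩ : {I : Set α // M.Indep I ∧ I ⊆ X})

lemma mrk_eq [M.Finite] (hI : M.IsBasis' I X) : mrk M X = I.ncard := by
  have := indep_nonempty M X
  refine le_antisymm (ciSup_le fun J => ?_) (ncard_le_mrk_s6 hI.indep hI.subset)
  obtain ⟨K, hK, hJK⟩ := J.2.1.subset_isBasis'_of_subset J.2.2
  have h1 : (M ↾ X).IsBase K := isBase_restrict_iff'.mpr hK
  have h2 : (M ↾ X).IsBase I := isBase_restrict_iff'.mpr hI
  rw [← h1.ncard_eq_ncard_of_isBase h2]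
  exact ncard_le_ncard hJK (M.set_finite K hK.indep.subset_ground)

lemma mrk_union_le [M.Finite] (A B : Set α) : mrk M (A ∪ B) ≤ mrk M A + mrk M B := by
  obtain ⟨I, hI⟩ := M.exists_isBasis' (A ∪ B)
  rw [mrk_eq hI]
  have hfin : I.Finite := M.set_finite I hI.indep.subset_ground
  have h1 : (I ∩ A).ncard ≤ mrk M A :=
    ncard_le_mrk_s6 (hI.indep.subset inter_subset_left) inter_subset_right
  have h2 : (I \ A).ncard ≤ mrk M B := by
    refine ncard_le_mrk_s6 (hI.indep.subset diff_subset) ?_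
    intro x hx
    rcases hI.subset hx.1 with h | h
    · exact absurd h hx.2
    · exact h
  have := ncard_inter_add_ncard_diff_eq_ncard I A hfin
  omega

lemma mrank_restrict [M.Finite] (hX : X ⊆ M.E) : mrank (M ↾ X) = mrk M X := by
  haveI : (M ↾ X).Finite := restrict_finite (M.set_finite X hX)
  obtain ⟨I, hI⟩ := M.exists_isBasis' X
  have hbase : (M ↾ X).IsBase I := isBase_restrict_iff'.mpr hI
  have : (M ↾ X).IsBasis' I (M ↾ X).E := hbase.isBasis_ground.isBasis'
  rw [mrank, mrk_eq this, mrk_eq hI]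

lemma flat_closure (M : Matroid α) (X : Set α) : M.IsFlat (M.closure X) := by
  have hne : Nonempty {F : Set α // M.IsFlat F ∧ X ∩ M.E ⊆ F} :=
    ⟨⟨M.E, M.ground_isFlat, inter_subset_right⟩⟩
  have h := IsFlat.iInter (M := M) (Fs := fun F : {F : Set α // M.IsFlat F ∧ X ∩ M.E ⊆ F} => F.1)
    (fun F => F.2.1)
  convert h using 1
  rw [closure_def, sInter_eq_iInter]
  exact iInter_congr fun F => rfl

lemma closure_subset_flat (hP : M.IsFlat P) (heP : e ∈ P) : M.closure {e} ⊆ P := by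
  rw [closure_def]
  exact sInter_subset_of_mem ⟨hP, (inter_subset_left).trans (singleton_subset_iff.mpr heP)⟩

lemma point_eq [M.Finite] (hP : M.IsFlat P) (hP1 : mrk M P = 1) (hf : M.Indep {e})
    (hfP : e ∈ P) : P = M.closure {e} := by
  refine le_antisymm (fun g hg => ?_) (closure_subset_flat hP hfP)
  rw [hf.mem_closure_iff']
  refine ⟨hP.subset_ground hg, fun hind => ?_⟩
  by_contra hne
  simp only [mem_singleton_iff] at hne
  have hcard : (insert g ({e} : Set α)).ncard = 2 := by
    rw [ncard_insert_of_notMem (by simpa) (finite_singleton e), ncard_singleton]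
  have : (insert g ({e} : Set α)).ncard ≤ mrk M P :=
    ncard_le_mrk_s6 hind (insert_subset hg (singleton_subset_iff.mpr hfP))
  omega

lemma mrk_point_closure [M.Finite] (hf : M.Indep {e}) : mrk M (M.closure {e}) = 1 := by
  rw [mrk_eq hf.isBasis_closure.isBasis', ncard_singleton]

lemma points_finite [M.Finite] (N : Matroid α) (hN : N.E ⊆ M.E) :
    {P : Set α | N.IsFlat P ∧ mrk N P = 1}.Finite := by
  apply ((M.ground_finite.subset hN).finite_subsets).subset
  exact fun P hP => hP.1.subset_ground

lemma eps_pos_mrk [M.Finite] (hX : X ⊆ M.E) (h : 1 ≤ eps M X) : 1 ≤ mrk M X := by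
  haveI : (M ↾ X).Finite := restrict_finite (M.set_finite X hX)
  obtain ⟨P, hP, hP1⟩ := nonempty_of_ncard_ne_zero (by omega : eps M X ≠ 0)
  obtain ⟨I, hI⟩ := (M ↾ X).exists_isBasis' P
  have hcard : I.ncard = 1 := by rw [← mrk_eq hI, hP1]
  obtain ⟨hind, hsub⟩ := restrict_indep_iff.mp hI.indep
  have : I.ncard ≤ mrk M X := ncard_le_mrk_s6 hind hsub
  omega

lemma eps_inj_le [M.Finite] (hA : A ⊆ M.E) (hAE : A ⊆ X) (hXE : X ⊆ M.E) :
    {P : Set α | ((M ↾ X).IsFlat P ∧ mrk (M ↾ X) P = 1) ∧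
      ∃ e, e ∈ P ∩ A ∧ (M ↾ X).Indep {e}}.ncard ≤ eps M A := by
  haveI hfX : (M ↾ X).Finite := restrict_finite (M.set_finite X hXE)
  haveI hfA : (M ↾ A).Finite := restrict_finite (M.set_finite A hA)
  classical
  set phi : Set α → Set α := fun P =>
    if h : ∃ e, e ∈ P ∩ A ∧ (M ↾ X).Indep {e} then (M ↾ A).closure {h.choose} else ∅ with hphi
  have key : ∀ P, ((M ↾ X).IsFlat P ∧ mrk (M ↾ X) P = 1) → ∀ h : ∃ e, e ∈ P ∩ A ∧ (M ↾ X).Indep {e},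
      (M ↾ A).Indep {h.choose} ∧ h.choose ∈ P ∩ A ∧ P = (M ↾ X).closure {h.choose} := by
    intro P hP h
    obtain ⟨heP, heI⟩ := h.choose_spec
    have hindA : (M ↾ A).Indep {h.choose} :=
      restrict_indep_iff.mpr ⟨heI.of_restrict, singleton_subset_iff.mpr heP.2⟩
    exact ⟨hindA, heP, point_eq hP.1 hP.2 heI heP.1⟩
  refine ncard_le_ncard_of_injOn phi ?_ ?_ (points_finite (M ↾ A) hA)
  · rintro P ⟨hP, hex⟩
    obtain ⟨hindA, -, -⟩ := key P hP hex
    refine ⟨?_, ?_⟩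
    · show (M ↾ A).IsFlat (phi P)
      rw [hphi]
      simp only [dif_pos hex]
      exact flat_closure _ _
    · show mrk (M ↾ A) (phi P) = 1
      rw [hphi]
      simp only [dif_pos hex]
      exact mrk_point_closure hindA
  · rintro P ⟨hP, hexP⟩ Q ⟨hQ, hexQ⟩ hPQ
    obtain ⟨hiP, heP, hPeq⟩ := key P hP hexP
    obtain ⟨hiQ, hfQ, hQeq⟩ := key Q hQ hexQ
    set e := hexP.choose
    set f := hexQ.choose
    rw [hphi] at hPQ
    simp only [dif_pos hexP, dif_pos hexQ] at hPQ
    -- f ∈ (M ↾ A).closure {e}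
    have hfclA : f ∈ (M ↾ A).closure {e} := by
      rw [hPQ]
      exact mem_closure_self _ f hfQ.2
    -- transfer to M ↾ X
    have hfclX : f ∈ (M ↾ X).closure {e} := by
      rw [hiP.mem_closure_iff'] at hfclA
      rw [(restrict_indep_iff.mpr ⟨hiP.of_restrict,
        singleton_subset_iff.mpr (hAE heP.2)⟩ : (M ↾ X).Indep {e}).mem_closure_iff']
      refine ⟨hAE hfclA.1, fun hind => hfclA.2 ?_⟩
      exact restrict_indep_iff.mpr ⟨hind.of_restrict,
        insert_subset hfQ.2 (singleton_subset_iff.mpr heP.2)⟩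
    have hfP : f ∈ P := by
      rw [hPeq]
      exact closure_subset_flat (by rw [← hPeq]; exact hP.1) (by rw [← hPeq]; exact heP.1) hfclX
    have hfX : (M ↾ X).Indep {f} := hexQ.choose_spec.2
    rw [point_eq hP.1 hP.2 hfX hfP, ← hQeq]

end helpers

lemma eps_union_le {α : Type*} {M : Matroid α} [M.Finite] {A B : Set α}
    (hA : A ⊆ M.E) (hB : B ⊆ M.E) : eps M (A ∪ B) ≤ eps M A + eps M B := by
  set X := A ∪ B with hX
  have hXE : X ⊆ M.E := union_subset hA hB
  haveI : (M ↾ X).Finite := restrict_finite (M.set_finite X hXE)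
  set S := {P : Set α | (M ↾ X).IsFlat P ∧ mrk (M ↾ X) P = 1} with hS
  set SA := {P : Set α | ((M ↾ X).IsFlat P ∧ mrk (M ↾ X) P = 1) ∧
      ∃ e, e ∈ P ∩ A ∧ (M ↾ X).Indep {e}} with hSA
  set SB := {P : Set α | ((M ↾ X).IsFlat P ∧ mrk (M ↾ X) P = 1) ∧
      ∃ e, e ∈ P ∩ B ∧ (M ↾ X).Indep {e}} with hSB
  have hsub : S ⊆ SA ∪ SB := by
    rintro P ⟨hPf, hP1⟩
    obtain ⟨I, hI⟩ := (M ↾ X).exists_isBasis' P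
    have hcard : I.ncard = 1 := by rw [← mrk_eq hI, hP1]
    obtain ⟨e, rfl⟩ := ncard_eq_one.mp hcard
    have heP : e ∈ P := hI.subset rfl
    have heX : e ∈ X := hPf.subset_ground heP
    rcases heX with he | he
    · exact Or.inl ⟨⟨hPf, hP1⟩, e, ⟨heP, he⟩, hI.indep⟩
    · exact Or.inr ⟨⟨hPf, hP1⟩, e, ⟨heP, he⟩, hI.indep⟩
  have hSfin : S.Finite := points_finite (M ↾ X) hXE
  have hle : S.ncard ≤ (SA ∪ SB).ncard := by
    refine ncard_le_ncard hsub ((hSfin.subset ?_).union (hSfin.subset ?_)) <;>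
      exact fun P hP => hP.1
  calc eps M X = S.ncard := rfl
    _ ≤ (SA ∪ SB).ncard := hle
    _ ≤ SA.ncard + SB.ncard := ncard_union_le SA SB
    _ ≤ eps M A + eps M B :=
        Nat.add_le_add (eps_inj_le hA subset_union_left hXE)
          (eps_inj_le hB subset_union_right hXE)

section ffacts
variable (f : ℕ → ℤ) (hf1 : 1 ≤ f 1) (hf : ∀ k, 1 ≤ k → 2 * f (k - 1) - 1 ≤ f k)
include hf1 hf

lemma fpos : ∀ k, 1 ≤ k → 1 ≤ f k := by
  intro k hk
  induction k with
  | zero => omega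
  | succ n ih =>
    rcases Nat.eq_zero_or_pos n with rfl | hn
    · exact hf1
    · have h2 := hf (n + 1) (by omega)
      have h3 := ih hn
      simp only [Nat.add_sub_cancel] at h2
      linarith

lemma fmono : ∀ j k, 1 ≤ j → j ≤ k → f j ≤ f k := by
  intro j k hj hjk
  induction k with
  | zero => omega
  | succ n ih =>
    rcases Nat.lt_or_ge j (n + 1) with h | h
    · have h2 := hf (n + 1) (by omega)
      have h3 := ih (by omega)
      have h4 := fpos f hf1 hf n (by omega)
      simp only [Nat.add_sub_cancel] at h2
      linarith
    · have : j = n + 1 := by omega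
      rw [this]

end ffacts

theorem aux {α : Type*} (f : ℕ → ℤ)
    (hf1 : 1 ≤ f 1) (hf : ∀ k, 1 ≤ k → 2 * f (k - 1) - 1 ≤ f k) :
    ∀ n (M : Matroid α), M.Finite → mrank M = n → 1 ≤ mrank M →
      f (mrank M) ≤ (eps M M.E : ℤ) →
    ∃ X ⊆ M.E, Round (M ↾ X) ∧ 1 ≤ mrank (M ↾ X) ∧
      f (mrank (M ↾ X)) ≤ (eps M X : ℤ) := by
  intro n
  induction n using Nat.strong_induction_on with
  | _ n IH =>
  intro M hfin hn h1 hE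
  haveI := hfin
  by_cases hR : Round M
  · refine ⟨M.E, Subset.rfl, ?_, ?_, ?_⟩ <;> rw [restrict_ground_eq_self] <;> assumption
  · rw [Round, not_not] at hR
    obtain ⟨A, B, hAB, -, hA, hB⟩ := hR
    have hAE : A ⊆ M.E := hAB ▸ subset_union_left
    have hBE : B ⊆ M.E := hAB ▸ subset_union_right
    have hsum : mrank M ≤ mrk M A + mrk M B := by
      rw [mrank, ← hAB]; exact mrk_union_le A B
    have hr2 : 2 ≤ mrank M := by omega
    have hepsum : eps M M.E ≤ eps M A + eps M B := by
      rw [← hAB]; exact eps_union_le hAE hBE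
    have inner : ∀ C, C ⊆ M.E → mrk M C < mrank M → f (mrank M) ≤ 2 * (eps M C : ℤ) →
        ∃ X ⊆ M.E, Round (M ↾ X) ∧ 1 ≤ mrank (M ↾ X) ∧
          f (mrank (M ↾ X)) ≤ (eps M X : ℤ) := by
      intro C hCE hClt hC2
      have hfr : 2 * f (mrank M - 1) - 1 ≤ f (mrank M) := hf (mrank M) (by omega)
      have hfC : f (mrank M - 1) ≤ (eps M C : ℤ) := by omega
      have hf1' : 1 ≤ f (mrank M - 1) := fpos f hf1 hf (mrank M - 1) (by omega)
      have hepsC1 : 1 ≤ eps M C := by exact_mod_cast (by omega : (1:ℤ) ≤ (eps M C : ℤ))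
      have hmrkC : 1 ≤ mrk M C := eps_pos_mrk hCE hepsC1
      haveI hCfin : (M ↾ C).Finite := restrict_finite (M.set_finite C hCE)
      have hrC : mrank (M ↾ C) = mrk M C := mrank_restrict hCE
      have hfrC : f (mrank (M ↾ C)) ≤ (eps M C : ℤ) :=
        le_trans (fmono f hf1 hf (mrank (M ↾ C)) (mrank M - 1) (by omega) (by omega)) hfC
      have hepsrw : eps (M ↾ C) (M ↾ C).E = eps M C := by
        simp [eps, restrict_ground_eq_self]
      obtain ⟨X, hXC, hround, h1X, hepsX⟩ :=
        IH (mrk M C) (by omega) (M ↾ C) hCfin hrC (by omega) (by rw [hepsrw]; rw [hrC] at hfrC ⊢; exact hfrC)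
      have hXC' : X ⊆ C := hXC
      have hres : (M ↾ C) ↾ X = M ↾ X := restrict_restrict_eq M hXC'
      have hepsX' : eps (M ↾ C) X = eps M X := by simp [eps, hres]
      rw [hres] at hround h1X
      rw [hres, hepsX'] at hepsX
      exact ⟨X, hXC'.trans hCE, hround, h1X, hepsX⟩
    rcases le_total (eps M A) (eps M B) with h | h
    · refine inner B hBE hB ?_
      have h1 : ((eps M M.E : ℤ)) ≤ (eps M A : ℤ) + (eps M B : ℤ) := by exact_mod_cast hepsum
      have h2 : ((eps M A : ℤ)) ≤ (eps M B : ℤ) := by exact_mod_cast h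
      linarith
    · refine inner A hAE hA ?_
      have h1 : ((eps M M.E : ℤ)) ≤ (eps M A : ℤ) + (eps M B : ℤ) := by exact_mod_cast hepsum
      have h2 : ((eps M B : ℤ)) ≤ (eps M A : ℤ) := by exact_mod_cast h
      linarith


/-- A matroid that is dense with respect to a doubling function has a dense round
restriction. -/
theorem stmt6 {α : Type*} (M : Matroid α) [M.Finite] (f : ℕ → ℤ)
    (hf1 : 1 ≤ f 1) (hf : ∀ k, 1 ≤ k → 2 * f (k - 1) - 1 ≤ f k)
    (hr : 1 ≤ mrank M) (heps : f (mrank M) ≤ (eps M M.E : ℤ)) :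
    ∃ X ⊆ M.E, Round (M ↾ X) ∧ 1 ≤ mrank (M ↾ X) ∧
      f (mrank (M ↾ X)) ≤ (eps M X : ℤ) := by
  exact aux f hf1 hf (mrank M) M ‹_› rfl hr heps
end

section
/- If M is a matroid with two disjoint lines L1 and L2 satisfying ⊓_M(L1, L2) = 1, and every line of M has at least q + 1 points, then for any e ∈ L1, the set L2 spans a line with at least q + 2 points in M/e. -/
open Matroid Set

namespace Aux

variable {α : Type*} {M : Matroid α} {I J X Y P : Set α} {e x f : α}

lemma mrk_eq_of_basis' [M.Finite] (hI : M.IsBasis' I X) : mrk M X = I.ncard := by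
  haveI : Nonempty {I : Set α // M.Indep I ∧ I ⊆ X} := ⟨⟨∅, M.empty_indep, empty_subset _⟩⟩
  have hb : ∀ J, M.Indep J → J ⊆ X → J.ncard ≤ I.ncard := by
    intro J hJ hJX
    obtain ⟨J', hJ', hJJ'⟩ := hJ.subset_isBasis'_of_subset hJX
    have hJ'fin : J'.Finite := M.set_finite J' hJ'.indep.subset_ground
    have hcard : J'.ncard = I.ncard := by
      rw [Set.ncard_def, Set.ncard_def, hJ'.encard_eq_encard hI]
    exact le_trans (Set.ncard_le_ncard hJJ' hJ'fin) hcard.le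
  refine le_antisymm (ciSup_le fun J => hb J.1 J.2.1 J.2.2) ?_
  exact le_ciSup_of_le ⟨I.ncard, by rintro n ⟨⟨J, hJ, hJX⟩, rfl⟩; exact hb J hJ hJX⟩
    ⟨I, hI.indep, hI.subset⟩ le_rfl

lemma mrk_eq_of_basis [M.Finite] (hI : M.IsBasis I X) : mrk M X = I.ncard :=
  mrk_eq_of_basis' hI.isBasis'

lemma mrk_indep [M.Finite] (hI : M.Indep I) : mrk M I = I.ncard :=
  mrk_eq_of_basis hI.isBasis_self

lemma mrk_closure [M.Finite] (X : Set α) : mrk M (M.closure X) = mrk M X := by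
  obtain ⟨I, hI⟩ := M.exists_isBasis' X
  rw [mrk_eq_of_basis' hI, mrk_eq_of_basis hI.isBasis_closure_right]

lemma mrk_mono [M.Finite] (h : X ⊆ Y) : mrk M X ≤ mrk M Y := by
  obtain ⟨I, hI⟩ := M.exists_isBasis' X
  obtain ⟨J, hJ, hIJ⟩ := hI.indep.subset_isBasis'_of_subset (hI.subset.trans h)
  rw [mrk_eq_of_basis' hI, mrk_eq_of_basis' hJ]
  exact Set.ncard_le_ncard hIJ (M.set_finite J hJ.indep.subset_ground)

lemma closure_flat (M : Matroid α) (X : Set α) : M.IsFlat (M.closure X) := by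
  refine ⟨fun I Y hIF hIY => ?_, M.closure_subset_ground X⟩
  have h1 := hIY.subset_closure
  have h2 := hIF.closure_eq_closure
  rw [h2, closure_closure] at h1
  exact h1

lemma mcontract_ground (C : Set α) : (mcontract M C).E = M.E \ C := by
  simp [mcontract]

lemma mcontract_finite [M.Finite] (C : Set α) : (mcontract M C).Finite :=
  ⟨by rw [mcontract_ground]; exact M.ground_finite.diff⟩

lemma spanning_compl (hel : M.Indep {e}) : M✶.closure (M.E \ {e}) = M.E := by
  obtain ⟨B0, hB0, heB0⟩ := hel.exists_isBase_superset
  have hB1 : M✶.IsBase (M.E \ B0) := hB0.compl_isBase_dual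
  have h1 : M.E \ B0 ⊆ M.E \ {e} :=
    diff_subset_diff_right (singleton_subset_iff.2 (heB0 rfl))
  have h2 : M✶.closure (M.E \ B0) = M.E := by rw [hB1.closure_eq, dual_ground]
  refine subset_antisymm ?_ ?_
  · have := M✶.closure_subset_ground (M.E \ {e}); rwa [dual_ground] at this
  · have h3 := M✶.closure_subset_closure h1
    rw [h2] at h3; exact h3

lemma mcontract_elem_indep (hel : M.Indep {e}) :
    (mcontract M {e}).Indep I ↔ e ∉ I ∧ M.Indep (insert e I) := by
  have he : e ∈ M.E := hel.subset_ground rfl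
  have hbase : ∀ B, (M✶ ↾ (M.E \ {e})).IsBase B ↔ M✶.IsBase B ∧ e ∉ B := by
    intro B
    rw [isBase_restrict_iff']
    constructor
    · intro hB
      have hB2 := hB.isBasis_closure_right
      rw [spanning_compl hel, ← dual_ground, isBasis_ground_iff] at hB2
      exact ⟨hB2, fun heB => (hB.subset heB).2 rfl⟩
    · rintro ⟨hB, heB⟩
      have hBsub : B ⊆ M.E \ {e} :=
        subset_diff_singleton (by rw [← dual_ground]; exact hB.subset_ground) heB
      exact ((hB.isBasis_of_subset (by rw [dual_ground]) hB.subset_ground).isBasis_subset hBsub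
        (by rw [dual_ground]; exact diff_subset)).isBasis'
  rw [mcontract, dual_indep_iff_exists', restrict_ground_eq]
  constructor
  · rintro ⟨hIE, B, hB, hdisj⟩
    rw [hbase] at hB
    obtain ⟨hB, heB⟩ := hB
    have hB' : M.IsBase (M.E \ B) := hB.compl_isBase_of_dual
    have hsub : insert e I ⊆ M.E \ B := by
      refine insert_subset ⟨he, heB⟩ fun x hx => ⟨(hIE hx).1, fun hxB => ?_⟩
      exact (hdisj.ne_of_mem hx hxB) rfl
    exact ⟨fun heI => (hIE heI).2 rfl, hB'.indep.subset hsub⟩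
  · rintro ⟨heI, hind⟩
    obtain ⟨B', hB', hsub⟩ := hind.exists_isBase_superset
    refine ⟨fun x hx => ⟨hind.subset_ground (Or.inr hx), fun hxe => heI (hxe ▸ hx)⟩,
      M.E \ B', by rw [hbase]; exact ⟨hB'.compl_isBase_dual, fun h => h.2 (hsub (mem_insert e I))⟩,
      disjoint_right.2 fun x hx hxI => hx.2 (hsub (Or.inr hxI))⟩

lemma mcontract_basis' (hel : M.Indep {e}) (hX : X ⊆ M.E \ {e})
    (hI : (mcontract M {e}).IsBasis' I X) :
    e ∉ I ∧ M.IsBasis (insert e I) (insert e X) := by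
  have he : e ∈ M.E := hel.subset_ground rfl
  have hIX := hI.subset
  have heI : e ∉ I := fun h => (hX (hIX h)).2 rfl
  obtain ⟨-, hIi⟩ := (mcontract_elem_indep hel).1 hI.indep
  refine ⟨heI, hIi.isBasis_of_forall_insert (insert_subset_insert hIX) fun y hy => ?_⟩
  obtain ⟨hy1, hy2⟩ := hy
  have hyX : y ∈ X := hy1.resolve_left fun h => hy2 (h ▸ mem_insert e I)
  have hyne : y ≠ e := fun h => hy2 (h ▸ mem_insert e I)
  have hyI : y ∉ I := fun h => hy2 (Or.inr h)
  rw [dep_iff]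
  refine ⟨fun hind => ?_, insert_subset ((hX hyX).1) (insert_subset he ((subset_insert e I).trans hIi.subset_ground))⟩
  rw [Set.insert_comm] at hind
  have : (mcontract M {e}).Indep (insert y I) := by
    rw [mcontract_elem_indep hel]
    exact ⟨fun h => h.elim (fun h' => hyne h'.symm) heI, hind⟩
  exact hI.insert_not_indep ⟨hyX, hyI⟩ this

lemma mcontract_closure (hel : M.Indep {e}) (hX : X ⊆ M.E \ {e}) :
    (mcontract M {e}).closure X = M.closure (insert e X) \ {e} := by
  have he : e ∈ M.E := hel.subset_ground rfl
  set N := mcontract M {e} with hN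
  obtain ⟨I, hI⟩ := N.exists_isBasis' X
  obtain ⟨heI, hbas⟩ := mcontract_basis' hel hX hI
  obtain ⟨-, hIi⟩ := (mcontract_elem_indep hel).1 hI.indep
  rw [← hI.closure_eq_closure, ← hbas.closure_eq_closure]
  ext x
  simp only [mem_diff, mem_singleton_iff]
  rw [hI.indep.mem_closure_iff', hIi.mem_closure_iff', mcontract_elem_indep hel,
    mcontract_ground, Set.insert_comm]
  simp only [mem_diff, mem_singleton_iff, mem_insert_iff]
  constructor
  · rintro ⟨⟨hxE, hxe⟩, himp⟩
    exact ⟨⟨hxE, fun hind => Or.inr (himp ⟨fun h =>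
      h.elim (fun h' => hxe h'.symm) heI, hind⟩)⟩, hxe⟩
  · rintro ⟨⟨hxE, himp⟩, hxe⟩
    refine ⟨⟨hxE, hxe⟩, fun ⟨h1, h2⟩ => ?_⟩
    exact (himp h2).resolve_left fun h => hxe h

lemma mcontract_mrk [M.Finite] (hel : M.Indep {e}) (hX : X ⊆ M.E \ {e}) :
    mrk (mcontract M {e}) X + 1 = mrk M (insert e X) := by
  haveI := mcontract_finite (M := M) ({e} : Set α)
  obtain ⟨I, hI⟩ := (mcontract M {e}).exists_isBasis' X
  obtain ⟨heI, hbas⟩ := mcontract_basis' hel hX hI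
  rw [mrk_eq_of_basis' hI, mrk_eq_of_basis hbas,
    Set.ncard_insert_of_notMem heI (M.set_finite I ((subset_insert e I).trans hbas.indep.subset_ground))]

lemma restrict_closure_eq (hX : X ⊆ M.E) (hY : Y ⊆ X) :
    (M ↾ X).closure Y = M.closure Y ∩ X := by
  obtain ⟨I, hI⟩ := (M ↾ X).exists_isBasis' Y
  have hIY := hI.subset
  have hIM : M.IsBasis' I Y := by
    have h := isBasis'_restrict_iff.1 hI
    rw [inter_eq_self_of_subset_left hY] at h
    exact h.1
  rw [← hI.closure_eq_closure, ← hIM.closure_eq_closure]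
  ext x
  rw [hI.indep.mem_closure_iff', mem_inter_iff, hIM.indep.mem_closure_iff',
    restrict_indep_iff, restrict_ground_eq]
  constructor
  · rintro ⟨hxX, h⟩
    exact ⟨⟨hX hxX, fun hind => h ⟨hind, insert_subset hxX (hIY.trans hY)⟩⟩, hxX⟩
  · rintro ⟨⟨hxE, h⟩, hxX⟩
    exact ⟨hxX, fun hp => h hp.1⟩

lemma point_iff [M.Finite] (hX : X ⊆ M.E) :
    ((M ↾ X).IsFlat P ∧ mrk (M ↾ X) P = 1) ↔
      ∃ x, x ∈ X ∧ M.Indep {x} ∧ P = M.closure {x} ∩ X := by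
  haveI : (M ↾ X).Finite := restrict_finite (M.set_finite X hX)
  constructor
  · rintro ⟨hP, hr⟩
    obtain ⟨I, hI⟩ := (M ↾ X).exists_isBasis' P
    have hcard : I.ncard = 1 := by rw [← mrk_eq_of_basis' hI, hr]
    obtain ⟨x, rfl⟩ := Set.ncard_eq_one.1 hcard
    have hPX : P ⊆ X := by
      have := hP.subset_ground; rwa [restrict_ground_eq] at this
    have hxP : x ∈ P := hI.subset rfl
    refine ⟨x, hPX hxP, hI.indep.of_restrict, ?_⟩
    rw [← restrict_closure_eq hX (singleton_subset_iff.2 (hPX hxP)),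
      hI.closure_eq_closure, hP.closure]
  · rintro ⟨x, hxX, hxi, rfl⟩
    have hxr : (M ↾ X).Indep {x} := hxi.indep_restrict_of_subset (singleton_subset_iff.2 hxX)
    have hcl : (M ↾ X).closure {x} = M.closure {x} ∩ X :=
      restrict_closure_eq hX (singleton_subset_iff.2 hxX)
    constructor
    · rw [← hcl]; exact closure_flat _ _
    · rw [← hcl, mrk_eq_of_basis hxr.isBasis_closure, ncard_singleton]

end Aux

/-- Two disjoint lines with local connectivity 1 produce a long line after contracting a
point of one of them. -/
theorem stmt13 {α : Type*} (M : Matroid α) [M.Finite] (q : ℕ) (L1 L2 : Set α)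
    (hL1 : M.IsFlat L1) (hL2 : M.IsFlat L2) (h1 : mrk M L1 = 2) (h2 : mrk M L2 = 2)
    (hdisj : Disjoint L1 L2) (hconn : mrk M (L1 ∪ L2) = 3)
    (hlines : ∀ L, M.IsFlat L → mrk M L = 2 → q + 1 ≤ eps M L)
    (e : α) (he : e ∈ L1) :
    mrk (mcontract M {e}) ((mcontract M {e}).closure L2) = 2 ∧
      q + 2 ≤ eps (mcontract M {e}) ((mcontract M {e}).closure L2) := by
  classical
  have hL1E : L1 ⊆ M.E := hL1.subset_ground
  have hL2E : L2 ⊆ M.E := hL2.subset_ground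
  have he1 : e ∈ M.E := hL1E he
  have heL2 : e ∉ L2 := fun h => (disjoint_left.1 hdisj he) h
  have hel : M.Indep {e} := by
    by_contra hcon
    have hecl : e ∈ M.closure ∅ := by
      rw [M.empty_indep.mem_closure_iff']
      exact ⟨he1, fun h => absurd (by simpa using h) hcon⟩
    have heL2' : e ∈ L2 := by
      have h := M.closure_subset_closure (empty_subset L2)
      rw [hL2.closure] at h; exact h hecl
    exact heL2 heL2'
  set N := mcontract M {e} with hNdef
  haveI hNfin : N.Finite := Aux.mcontract_finite {e}
  have hNE : N.E = M.E \ {e} := Aux.mcontract_ground {e}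
  have hL2N : L2 ⊆ M.E \ {e} := subset_diff_singleton hL2E heL2
  have hL2NE : L2 ⊆ N.E := by rw [hNE]; exact hL2N
  obtain ⟨I2, hI2⟩ := M.exists_isBasis L2 hL2E
  have hI2fin : I2.Finite := M.set_finite I2 hI2.indep.subset_ground
  have hI2card : I2.ncard = 2 := by rw [← Aux.mrk_eq_of_basis hI2]; exact h2
  have hI2sub : I2 ⊆ L2 := hI2.subset
  have heI2 : e ∉ I2 := fun h => heL2 (hI2sub h)
  have hclI2 : M.closure I2 = L2 := by rw [hI2.closure_eq_closure, hL2.closure]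
  have hins : M.Indep (insert e I2) := by
    rw [hI2.indep.insert_indep_iff_of_notMem heI2, hclI2]
    exact ⟨he1, heL2⟩
  have hbas3 : M.IsBasis (insert e I2) (insert e L2) := by
    refine hins.isBasis_of_subset_of_subset_closure (insert_subset_insert hI2sub) ?_
    refine insert_subset (M.mem_closure_of_mem (mem_insert e I2) hins.subset_ground) ?_
    exact hI2.subset_closure.trans (M.closure_subset_closure (subset_insert e I2))
  have hrk3 : mrk M (insert e L2) = 3 := by
    rw [Aux.mrk_eq_of_basis hbas3, Set.ncard_insert_of_notMem heI2 hI2fin, hI2card]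
  have hrkN : mrk N L2 = 2 := by
    have h := Aux.mcontract_mrk hel hL2N
    rw [← hNdef, hrk3] at h; omega
  set F := N.closure L2 with hFdef
  have hFflat : N.IsFlat F := Aux.closure_flat N L2
  have hFeq : F = M.closure (insert e L2) \ {e} := Aux.mcontract_closure hel hL2N
  have part1 : mrk N F = 2 := by rw [hFdef, Aux.mrk_closure]; exact hrkN
  refine ⟨part1, ?_⟩
  have hFN : F ⊆ N.E := N.closure_subset_ground L2
  have hFE : F ⊆ M.E := fun x hx => by
    have := hFN hx; rw [hNE] at this; exact this.1
  have hL2F : L2 ⊆ F := N.subset_closure L2 hL2NE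
  have hclsingle : ∀ x ∈ L2, N.closure {x} = M.closure (insert e {x}) \ {e} :=
    fun x hx => Aux.mcontract_closure hel (singleton_subset_iff.2 (hL2N hx))
  have hclx : ∀ x ∈ L2, M.closure {x} ⊆ L2 := fun x hx => by
    have := M.closure_subset_closure (singleton_subset_iff.2 hx)
    rwa [hL2.closure] at this
  set S := {P : Set α | (M ↾ L2).IsFlat P ∧ mrk (M ↾ L2) P = 1} with hSdef
  set T := {P : Set α | (N ↾ F).IsFlat P ∧ mrk (N ↾ F) P = 1} with hTdef
  have hSrep : ∀ P ∈ S, ∃ x, x ∈ L2 ∧ M.Indep {x} ∧ P = M.closure {x} := by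
    intro P hP
    obtain ⟨x, hx, hxi, rfl⟩ := (Aux.point_iff hL2E).1 hP
    exact ⟨x, hx, hxi, inter_eq_self_of_subset_left (hclx x hx)⟩
  have hNclx_eqP : ∀ x ∈ L2, N.closure (M.closure {x}) = N.closure {x} := by
    intro x hx
    refine subset_antisymm ?_ (N.closure_subset_closure
      (singleton_subset_iff.2 (M.mem_closure_of_mem rfl (singleton_subset_iff.2 (hL2E hx)))))
    have h1' : M.closure {x} ⊆ N.closure {x} := by
      rw [hclsingle x hx]
      exact fun y hy => ⟨M.closure_subset_closure (subset_insert e {x}) hy,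
        fun hyeq => heL2 (hyeq ▸ hclx x hx hy)⟩
    have h2' := N.closure_subset_closure h1'
    rwa [N.closure_closure] at h2'
  have hNindep_single : ∀ x ∈ L2, M.Indep {x} → N.Indep {x} := by
    intro x hx hxi
    rw [hNdef, Aux.mcontract_elem_indep hel]
    refine ⟨fun h => heL2 (by obtain rfl := mem_singleton_iff.1 h; exact hx), ?_⟩
    rw [hxi.insert_indep_iff_of_notMem (fun h => heL2 (by obtain rfl := mem_singleton_iff.1 h; exact hx))]
    exact ⟨he1, fun h => heL2 (hclx x hx h)⟩
  have himg : ∀ P ∈ S, N.closure P ∈ T := by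
    intro P hP
    obtain ⟨x, hx, hxi, rfl⟩ := hSrep P hP
    rw [hNclx_eqP x hx]
    refine (Aux.point_iff hFN).2 ⟨x, hL2F hx, hNindep_single x hx hxi, ?_⟩
    have hsub : N.closure {x} ⊆ F := N.closure_subset_closure (singleton_subset_iff.2 hx)
    exact (inter_eq_self_of_subset_left hsub).symm
  have hkey : ∀ x y, x ∈ L2 → y ∈ L2 →
      N.closure {x} = N.closure {y} → y ∈ M.closure {x} := by
    intro x y hx hy hEq
    have hyN : y ∈ N.closure {y} := N.mem_closure_of_mem rfl (singleton_subset_iff.2 (hL2NE hy))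
    rw [← hEq, hclsingle x hx] at hyN
    by_contra hyn
    have hxch := Matroid.closure_exchange (M := M) (X := {x}) ⟨hyN.1, hyn⟩
    have hsub : M.closure (insert y {x}) ⊆ L2 := by
      have h2' := M.closure_subset_closure
        (show insert y {x} ⊆ L2 from insert_subset hy (singleton_subset_iff.2 hx))
      rwa [hL2.closure] at h2'
    exact heL2 (hsub hxch.1)
  have hinj : Set.InjOn (fun P => N.closure P) S := by
    intro P1 hP1 P2 hP2 hEq
    obtain ⟨x, hx, hxi, rfl⟩ := hSrep P1 hP1
    obtain ⟨y, hy, hyi, rfl⟩ := hSrep P2 hP2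
    simp only at hEq
    rw [hNclx_eqP x hx, hNclx_eqP y hy] at hEq
    have hyx := hkey x y hx hy hEq
    have hxy := hkey y x hy hx hEq.symm
    apply subset_antisymm
    · have := M.closure_subset_closure (singleton_subset_iff.2 hxy)
      rwa [Matroid.closure_closure] at this
    · have := M.closure_subset_closure (singleton_subset_iff.2 hyx)
      rwa [Matroid.closure_closure] at this
  have hfex : ∃ f ∈ L1, f ∉ M.closure {e} := by
    by_contra hcon
    push_neg at hcon
    have hle : mrk M L1 ≤ mrk M (M.closure {e}) := Aux.mrk_mono hcon
    rw [Aux.mrk_closure, Aux.mrk_indep hel, ncard_singleton, h1] at hle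
    omega
  obtain ⟨f, hfL1, hf⟩ := hfex
  have hfE : f ∈ M.E := hL1E hfL1
  have hfe : f ≠ e := fun h => hf (by rw [h]; exact M.mem_closure_of_mem rfl (singleton_subset_iff.2 he1))
  have hfind : M.Indep (insert e {f}) := by
    have h' : M.Indep (insert f {e}) := by
      rw [hel.insert_indep_iff_of_notMem (fun h => hfe (mem_singleton_iff.1 h))]
      exact ⟨hfE, hf⟩
    rwa [Set.pair_comm f e] at h'
  have hfNind : N.Indep {f} := by
    rw [hNdef, Aux.mcontract_elem_indep hel]
    exact ⟨fun h => hfe (mem_singleton_iff.1 h).symm, hfind⟩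
  obtain ⟨J', hJ', hsubJ'⟩ := hins.subset_isBasis'_of_subset
    (show insert e I2 ⊆ L1 ∪ L2 from
      insert_subset (Or.inl he) (hI2sub.trans subset_union_right))
  have hJ'card : J'.ncard = 3 := by rw [← Aux.mrk_eq_of_basis' hJ', hconn]
  have hJeq : insert e I2 = J' := by
    refine Set.eq_of_subset_of_ncard_le hsubJ' ?_ (M.set_finite J' hJ'.indep.subset_ground)
    rw [hJ'card, Set.ncard_insert_of_notMem heI2 hI2fin, hI2card]
  have hLL2cl : M.closure (insert e L2) = M.closure (L1 ∪ L2) := by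
    rw [← hbas3.closure_eq_closure, hJeq, hJ'.closure_eq_closure]
  have hfF : f ∈ F := by
    rw [hFeq]
    refine ⟨?_, hfe⟩
    rw [hLL2cl]
    exact M.mem_closure_of_mem (Or.inl hfL1) (union_subset hL1E hL2E)
  have hPf : N.closure {f} ∈ T := by
    refine (Aux.point_iff hFN).2 ⟨f, hfF, hfNind, ?_⟩
    have hsub : N.closure {f} ⊆ F := by
      have := N.closure_subset_closure (singleton_subset_iff.2 hfF)
      rwa [hFflat.closure] at this
    exact (inter_eq_self_of_subset_left hsub).symm
  have hPfnot : N.closure {f} ∉ (fun P => N.closure P) '' S := by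
    rintro ⟨P, hP, hPeq⟩
    obtain ⟨x, hx, hxi, rfl⟩ := hSrep P hP
    simp only at hPeq
    rw [hNclx_eqP x hx] at hPeq
    have hxN : x ∈ N.closure {x} := N.mem_closure_of_mem rfl (singleton_subset_iff.2 (hL2NE hx))
    have hcf : N.closure {f} = M.closure (insert e {f}) \ {e} :=
      Aux.mcontract_closure hel (singleton_subset_iff.2 ⟨hfE, hfe⟩)
    rw [hPeq, hcf] at hxN
    have hsubL1 : M.closure (insert e {f}) ⊆ L1 := by
      have := M.closure_subset_closure
        (show insert e {f} ⊆ L1 from insert_subset he (singleton_subset_iff.2 hfL1))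
      rwa [hL1.closure] at this
    exact (disjoint_left.1 hdisj (hsubL1 hxN.1)) hx
  have hTfin : T.Finite := by
    refine Set.Finite.subset M.ground_finite.finite_subsets fun P hP => ?_
    have hPs := hP.1.subset_ground
    rw [restrict_ground_eq] at hPs
    exact hPs.trans hFE
  have hq1 : q + 1 ≤ S.ncard := by
    have h' := hlines L2 hL2 h2
    unfold eps at h'
    exact h'
  have himgsub : insert (N.closure {f}) ((fun P => N.closure P) '' S) ⊆ T := by
    rintro P (rfl | ⟨Q, hQ, rfl⟩)
    · exact hPf
    · exact himg Q hQ
  have himgfin : ((fun P => N.closure P) '' S).Finite :=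
    hTfin.subset fun P hP => himgsub (Or.inr hP)
  have hcount : q + 2 ≤ T.ncard := by
    have h1' : ((fun P => N.closure P) '' S).ncard = S.ncard := Set.ncard_image_of_injOn hinj
    have h2' : (insert (N.closure {f}) ((fun P => N.closure P) '' S)).ncard = S.ncard + 1 := by
      rw [Set.ncard_insert_of_notMem hPfnot himgfin, h1']
    have h3' := Set.ncard_le_ncard himgsub hTfin
    omega
  show q + 2 ≤ eps N F
  unfold eps
  exact hcount
end
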